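/- arXiv:2312.08180 — 4 statements merged into one kernel-verified Lean document; each statement's English description precedes it below -/
import Mathlib

section
/- There exist constants d₁ > 0, d₂ > 0 and γ > 0, depending only on Ω, σ, c and q, such that every solution of the Maxwell–Bloch system with one two-level molecule satisfying the charge constraint |C₁(t)|² + |C₂(t)|² = 1 obeys |A(t)|² + |B(t)|² ≤ d₁·(|A(0)|² + |B(0)|²)·e^{−γt} + d₂ for all t > 0. -/
/-- The molecular current `j(t) = 2q·Im(conj(C₁(t))·C₂(t))`. -/
noncomputable def mbCurrent (q : ℝ) (C₁ C₂ : ℝ → ℂ) (t : ℝ) : ℝ :=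
  2 * q * ((starRingEnd ℂ) (C₁ t) * C₂ t).im

/-- A solution of the Maxwell–Bloch system with one two-level molecule on `[0,∞)`:
`A' = B`, `B' = -Ω²A - σB + c·j`, `iℏC₁' = ℏω₁C₁ + i·a·C₂`, `iℏC₂' = ℏω₂C₂ - i·a·C₁`,
with `a(t) = (q/c)(A(t) + A_p(t))`. -/
structure IsMBSolution (Ω σ c hbar ω₁ ω₂ q : ℝ) (Ap A B : ℝ → ℝ)
    (C₁ C₂ : ℝ → ℂ) : Prop where
  hA : ∀ t ∈ Set.Ici (0 : ℝ), HasDerivAt A (B t) t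
  hB : ∀ t ∈ Set.Ici (0 : ℝ),
      HasDerivAt B (-Ω ^ 2 * A t - σ * B t + c * mbCurrent q C₁ C₂ t) t
  hC₁ : ∀ t ∈ Set.Ici (0 : ℝ), ∃ d : ℂ, HasDerivAt C₁ d t ∧
      Complex.I * (hbar : ℂ) * d =
        (hbar : ℂ) * (ω₁ : ℂ) * C₁ t
          + Complex.I * ((q / c * (A t + Ap t) : ℝ) : ℂ) * C₂ t
  hC₂ : ∀ t ∈ Set.Ici (0 : ℝ), ∃ d : ℂ, HasDerivAt C₂ d t ∧
      Complex.I * (hbar : ℂ) * d =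
        (hbar : ℂ) * (ω₂ : ℂ) * C₂ t
          - Complex.I * ((q / c * (A t + Ap t) : ℝ) : ℂ) * C₁ t

lemma key_ineq (Ω σ c q ε K A B j : ℝ) (hΩ : 0 < Ω) (hσ : 0 < σ)
    (hε : 0 < ε) (hε1 : 4*ε*(Ω^2+σ^2) ≤ σ*Ω^2) (hε2 : ε ≤ 1)
    (hK : σ*Ω^2*K = 2*c^2*q^2*(Ω^2+σ)) (hj : j^2 ≤ q^2) :
    ε/2*(Ω^2*A^2 + B^2 + 2*ε*A*B)
      + (2*Ω^2*A*B + 2*B*(-Ω^2*A - σ*B + c*j)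
        + 2*ε*(B^2 + A*(-Ω^2*A - σ*B + c*j))) ≤ K := by
  have hσΩ : 0 < σ*Ω^2 := by positivity
  rw [← mul_le_mul_iff_right₀ hσΩ, hK]
  have hεσ : ε ≤ σ := by nlinarith [sq_nonneg Ω, sq_nonneg σ, hε.le, hΩ.le]
  have hC1 : (0:ℝ) ≤ Ω^2*(σ*B - 2*c*j)^2 := by positivity
  have hC2 : (0:ℝ) ≤ ε*σ*(Ω^2*A - 2*c*j)^2 := by positivity
  have hC3 : (0:ℝ) ≤ ε*σ*(Ω^2*A + (2*σ-ε)*B)^2 := by positivity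
  have hA2 : (0:ℝ) ≤ ε*σ*Ω^2*Ω^2*A^2 := by positivity
  have hB2a : (0:ℝ) ≤ ε^2*σ*(4*σ-ε)*B^2 := by
    have : 0 ≤ 4*σ - ε := by linarith
    positivity
  have hB2b : (0:ℝ) ≤ σ^2*Ω^2*B^2 := by positivity
  have hε1B : σ*B^2*(4*ε*(Ω^2+σ^2)) ≤ σ*B^2*(σ*Ω^2) :=
    mul_le_mul_of_nonneg_left hε1 (by positivity)
  have hjw : 2*Ω^2*c^2*j^2 ≤ 2*Ω^2*c^2*q^2 :=
    mul_le_mul_of_nonneg_left hj (by positivity)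
  have hjσ : 2*σ*c^2*j^2 ≤ 2*σ*c^2*q^2 :=
    mul_le_mul_of_nonneg_left hj (by positivity)
  have hjε : (0:ℝ) ≤ (1-ε)*(σ*c^2*j^2) := by
    have : 0 ≤ 1 - ε := by linarith
    positivity
  nlinarith [hC1, hC2, hC3, hA2, hB2a, hB2b, hε1B, hjw, hjσ, hjε]

lemma gron_step (x y k E : ℝ) (hE : 1 ≤ E) (hk : 0 ≤ k)
    (h1 : E*(x - k) ≤ y - k) : x ≤ y * E⁻¹ + k := by
  have hEpos : 0 < E := lt_of_lt_of_le one_pos hE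
  have hEinv : 0 < E⁻¹ := by positivity
  have h2 := mul_le_mul_of_nonneg_left h1 hEinv.le
  rw [← mul_assoc, inv_mul_cancel₀ (ne_of_gt hEpos), one_mul] at h2
  have h3 : E⁻¹ ≤ 1 := inv_le_one_of_one_le₀ hE
  nlinarith [h2, h3, mul_nonneg hEinv.le hk, mul_nonneg hk (sub_nonneg.mpr h3)]

lemma lowV (w e a b m : ℝ) (hm : 0 < m) (hmw : m ≤ w) (hm1 : m ≤ 1)
    (hem : 2*e ≤ m) (he : 0 < e) :
    m*(a^2+b^2) ≤ 2*(w*a^2 + b^2 + 2*e*a*b) := by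
  nlinarith [mul_nonneg he.le (sq_nonneg (a+b)),
    mul_nonneg (sub_nonneg.2 hmw) (sq_nonneg a),
    mul_nonneg (by linarith : (0:ℝ) ≤ m - 2*e) (sq_nonneg a),
    mul_nonneg (by linarith : (0:ℝ) ≤ 1 - m) (sq_nonneg b),
    mul_nonneg (by linarith : (0:ℝ) ≤ m - 2*e) (sq_nonneg b)]

lemma upV (w e a b : ℝ) (hw : 0 < w) (he : 0 < e) (he1 : e ≤ 1) :
    w*a^2 + b^2 + 2*e*a*b ≤ (w+2)*(a^2+b^2) := by
  nlinarith [mul_nonneg he.le (sq_nonneg (a-b)),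
    mul_nonneg (by linarith : (0:ℝ) ≤ 1 - e) (sq_nonneg a),
    mul_nonneg (by linarith : (0:ℝ) ≤ 1 - e) (sq_nonneg b),
    mul_nonneg hw.le (sq_nonneg b)]

/-- A priori exponential bound for the Maxwell amplitudes, with constants
depending only on `Ω, σ, c, q`. -/
theorem mb_maxwell_apriori_bound
    (Ω σ c q : ℝ) (hΩ : 0 < Ω) (hσ : 0 < σ) (hc : 0 < c) (hq : 0 < q) :
    ∃ d₁ d₂ γ : ℝ, 0 < d₁ ∧ 0 < d₂ ∧ 0 < γ ∧
      ∀ (hbar ω₁ ω₂ : ℝ) (Ap A B : ℝ → ℝ) (C₁ C₂ : ℝ → ℂ),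
        0 < hbar → ω₁ < ω₂ → ContinuousOn Ap (Set.Ici 0) →
        IsMBSolution Ω σ c hbar ω₁ ω₂ q Ap A B C₁ C₂ →
        (∀ t ≥ (0 : ℝ), ‖C₁ t‖ ^ 2 + ‖C₂ t‖ ^ 2 = 1) →
        ∀ t > (0 : ℝ),
          A t ^ 2 + B t ^ 2 ≤ d₁ * (A 0 ^ 2 + B 0 ^ 2) * Real.exp (-γ * t) + d₂ := by
  obtain ⟨m, hmpos, hmΩ, hm1⟩ : ∃ m : ℝ, 0 < m ∧ m ≤ Ω^2 ∧ m ≤ 1 :=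
    ⟨min (Ω^2) 1, lt_min (by positivity) one_pos, min_le_left _ _, min_le_right _ _⟩
  obtain ⟨ε, hεpos, hε1, hεm⟩ :
      ∃ ε : ℝ, 0 < ε ∧ 4*ε*(Ω^2+σ^2) ≤ σ*Ω^2 ∧ 2*ε ≤ m := by
    refine ⟨min (σ*Ω^2/(4*(Ω^2+σ^2))) (m/2),
      lt_min (by positivity) (by positivity), ?_, ?_⟩
    · have h := min_le_left (σ*Ω^2/(4*(Ω^2+σ^2))) (m/2)
      rw [le_div_iff₀ (by positivity)] at h
      linarith
    · have := min_le_right (σ*Ω^2/(4*(Ω^2+σ^2))) (m/2); linarith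
  have hε2 : ε ≤ 1 := by linarith
  obtain ⟨K, hKpos, hK⟩ : ∃ K : ℝ, 0 < K ∧ σ*Ω^2*K = 2*c^2*q^2*(Ω^2+σ) :=
    ⟨2*c^2*q^2*(Ω^2+σ)/(σ*Ω^2), by positivity, by field_simp⟩
  set γ : ℝ := ε/2 with hγdef
  have hγpos : 0 < γ := by positivity
  have hγne : γ ≠ 0 := ne_of_gt hγpos
  have hmne : m ≠ 0 := ne_of_gt hmpos
  refine ⟨2*(Ω^2+2)/m, 2*K/(m*γ), γ, div_pos (by positivity) hmpos,
    div_pos (by linarith) (mul_pos hmpos hγpos), hγpos, ?_⟩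
  intro hbar ω₁ ω₂ Ap A B C₁ C₂ _ _ _ sol hnorm t ht
  -- current bound
  have hj : ∀ s ∈ Set.Ici (0:ℝ), (mbCurrent q C₁ C₂ s)^2 ≤ q^2 := by
    intro s hs
    have hn := hnorm s hs
    have him : |((starRingEnd ℂ) (C₁ s) * C₂ s).im|
        ≤ ‖(starRingEnd ℂ) (C₁ s) * C₂ s‖ := Complex.abs_im_le_norm _
    have habs : ‖(starRingEnd ℂ) (C₁ s) * C₂ s‖ = ‖C₁ s‖ * ‖C₂ s‖ := by
      rw [norm_mul, Complex.norm_conj]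
    have h12 : ‖C₁ s‖ * ‖C₂ s‖ ≤ 1/2 := by
      nlinarith [sq_nonneg (‖C₁ s‖ - ‖C₂ s‖)]
    have h0 : |((starRingEnd ℂ) (C₁ s) * C₂ s).im| ≤ 1/2 := by
      calc |((starRingEnd ℂ) (C₁ s) * C₂ s).im| ≤ _ := him
        _ ≤ 1/2 := by rw [habs]; exact h12
    have himsq : ((starRingEnd ℂ) (C₁ s) * C₂ s).im^2 ≤ (1/2)^2 := by
      rw [← sq_abs]
      nlinarith [abs_nonneg ((starRingEnd ℂ) (C₁ s) * C₂ s).im]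
    unfold mbCurrent
    nlinarith [himsq, sq_nonneg q]
  -- energy function and its derivative
  set V : ℝ → ℝ := fun s => Ω^2*(A s)^2 + (B s)^2 + 2*ε*(A s)*(B s) with hVdef
  set D : ℝ → ℝ := fun s => -Ω^2*A s - σ*B s + c*mbCurrent q C₁ C₂ s with hDdef
  set VD : ℝ → ℝ := fun s => 2*Ω^2*(A s)*(B s) + 2*(B s)*(D s)
      + 2*ε*((B s)^2 + (A s)*(D s)) with hVDdef
  have hVderiv : ∀ s ∈ Set.Ici (0:ℝ), HasDerivAt V (VD s) s := by
    intro s hs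
    have hA' := sol.hA s hs
    have hB' : HasDerivAt B (D s) s := sol.hB s hs
    have hbig := (((hA'.mul hA').const_mul (Ω^2)).add (hB'.mul hB')).add
      ((hA'.mul hB').const_mul (2*ε))
    convert hbig using 1
    · rfl
    · rfl
    · funext u; simp only [hVdef, Pi.add_apply, Pi.mul_apply]; ring
    · simp only [hVDdef]; ring
  set W : ℝ → ℝ := fun s => Real.exp (γ*s) * (V s - K/γ) with hWdef
  have hWderiv : ∀ s ∈ Set.Ici (0:ℝ),
      HasDerivAt W (Real.exp (γ*s)*γ*(V s - K/γ) + Real.exp (γ*s)*(VD s)) s := by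
    intro s hs
    have h0 : HasDerivAt (fun u : ℝ => γ*u) γ s := by
      simpa using (hasDerivAt_id s).const_mul γ
    have hexp : HasDerivAt (fun u => Real.exp (γ*u)) (Real.exp (γ*s)*γ) s := h0.exp
    exact hexp.mul ((hVderiv s hs).sub_const (K/γ))
  have hWanti : AntitoneOn W (Set.Ici 0) := by
    apply antitoneOn_of_deriv_nonpos (convex_Ici 0)
    · intro s hs
      exact ((hWderiv s hs).continuousAt).continuousWithinAt
    · intro s hs
      rw [interior_Ici] at hs
      exact ((hWderiv s (Set.mem_Ici.mpr (le_of_lt hs))).differentiableAt).differentiableWithinAt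
    · intro s hs
      rw [interior_Ici] at hs
      rw [(hWderiv s (Set.mem_Ici.mpr (le_of_lt hs))).deriv]
      have hkey := key_ineq Ω σ c q ε K (A s) (B s) (mbCurrent q C₁ C₂ s)
        hΩ hσ hεpos hε1 hε2 hK (hj s (Set.mem_Ici.mpr (le_of_lt hs)))
      have hVs : γ * V s + VD s ≤ K := by
        simp only [hVdef, hVDdef, hDdef, hγdef]
        linarith [hkey]
      have hepos : (0:ℝ) < Real.exp (γ*s) := Real.exp_pos _
      have heq : Real.exp (γ*s)*γ*(V s - K/γ) + Real.exp (γ*s)*(VD s)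
          = Real.exp (γ*s) * (γ*V s + VD s - K) := by
        field_simp
        ring
      rw [heq]
      exact mul_nonpos_of_nonneg_of_nonpos hepos.le (by linarith)
  -- conclude via the Gronwall-type bound
  have hWt : W t ≤ W 0 := hWanti (le_refl (0:ℝ)) (le_of_lt ht) (le_of_lt ht)
  have hepos : (0:ℝ) < Real.exp (γ*t) := Real.exp_pos _
  have hW0 : W 0 = V 0 - K/γ := by simp [hWdef]
  have hVt : V t ≤ (V 0) * Real.exp (-(γ*t)) + K/γ := by
    have h1 : Real.exp (γ*t) * (V t - K/γ) ≤ V 0 - K/γ := by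
      rw [← hW0]; exact hWt
    have he1 : (1:ℝ) ≤ Real.exp (γ*t) := by
      apply Real.one_le_exp; positivity
    have hinv : Real.exp (-(γ*t)) = (Real.exp (γ*t))⁻¹ := Real.exp_neg _
    rw [hinv]
    have hKγ : 0 ≤ K/γ := by positivity
    exact gron_step _ _ _ _ he1 hKγ h1
  have hlow : m * (A t^2 + B t^2) ≤ 2 * V t := by
    simp only [hVdef]
    exact lowV (Ω^2) ε (A t) (B t) m hmpos hmΩ hm1 hεm hεpos
  have hup : V 0 ≤ (Ω^2+2) * (A 0^2 + B 0^2) := by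
    simp only [hVdef]
    exact upV (Ω^2) ε (A 0) (B 0) (by positivity) hεpos hε2
  clear hWanti hWderiv hVderiv hj hnorm hWt hW0 hepos
  clear_value V D VD W
  clear hVdef hDdef hVDdef hWdef D VD W
  have heneg : (0:ℝ) < Real.exp (-(γ*t)) := Real.exp_pos _
  have hexpr : -γ*t = -(γ*t) := by ring
  rw [hexpr]
  apply le_of_mul_le_mul_left _ hmpos
  have hrhs : m * (2*(Ω^2+2)/m * (A 0 ^ 2 + B 0 ^ 2) * Real.exp (-(γ * t)) + 2*K/(m*γ))
      = 2*(Ω^2+2) * (A 0 ^ 2 + B 0 ^ 2) * Real.exp (-(γ * t)) + 2*(K/γ) := by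
    field_simp
  rw [hrhs]
  have h6 : V 0 * Real.exp (-(γ*t)) ≤ (Ω^2+2)*(A 0^2+B 0^2) * Real.exp (-(γ*t)) :=
    mul_le_mul_of_nonneg_right hup heneg.le
  linarith [hlow, hVt, h6]
end

section
/- There exist constants D₁ > 0, D₂ > 0 and γ > 0, depending only on Ω, σ, c and q, such that every solution X(t) = (A(t), B(t), C₁(t), C₂(t)) of the Maxwell–Bloch system with one two-level molecule satisfying the charge constraint |C₁(t)|² + |C₂(t)|² = 1 obeys the a priori bound |X(t)| ≤ D₁·|X(0)|·e^{−γt} + D₂ for all t > 0, where |X| denotes the Euclidean norm of (A, B, C₁, C₂) in ℝ² × ℂ². -/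
private lemma sqrt_add_le_aux {x y : ℝ} (hx : 0 ≤ x) (hy : 0 ≤ y) :
    Real.sqrt (x + y) ≤ Real.sqrt x + Real.sqrt y := by
  calc Real.sqrt (x + y) ≤ Real.sqrt ((Real.sqrt x + Real.sqrt y) ^ 2) := by
        apply Real.sqrt_le_sqrt
        nlinarith [Real.sq_sqrt hx, Real.sq_sqrt hy,
          mul_nonneg (Real.sqrt_nonneg x) (Real.sqrt_nonneg y)]
    _ = _ := Real.sqrt_sq (by positivity)

set_option maxHeartbeats 1000000 in
/-- A priori bound for the full state `X(t) = (A(t),B(t),C₁(t),C₂(t))` in the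
Euclidean norm of `ℝ² × ℂ²`, with constants depending only on `Ω, σ, c, q`. -/
theorem mb_state_apriori_bound
    (Ω σ c q : ℝ) (hΩ : 0 < Ω) (hσ : 0 < σ) (hc : 0 < c) (hq : 0 < q) :
    ∃ D₁ D₂ γ : ℝ, 0 < D₁ ∧ 0 < D₂ ∧ 0 < γ ∧
      ∀ (hbar ω₁ ω₂ : ℝ) (Ap A B : ℝ → ℝ) (C₁ C₂ : ℝ → ℂ),
        0 < hbar → ω₁ < ω₂ → ContinuousOn Ap (Set.Ici 0) →
        IsMBSolution Ω σ c hbar ω₁ ω₂ q Ap A B C₁ C₂ →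
        (∀ t ≥ (0 : ℝ), ‖C₁ t‖ ^ 2 + ‖C₂ t‖ ^ 2 = 1) →
        ∀ t > (0 : ℝ),
          Real.sqrt (A t ^ 2 + B t ^ 2 + ‖C₁ t‖ ^ 2 + ‖C₂ t‖ ^ 2) ≤
            D₁ * Real.sqrt (A 0 ^ 2 + B 0 ^ 2 + ‖C₁ 0‖ ^ 2 + ‖C₂ 0‖ ^ 2) *
              Real.exp (-γ * t) + D₂ := by
  have hden : (0:ℝ) < 2*Ω^2+σ^2 := by positivity
  obtain ⟨ε, hε0, hεm1, hεm2, hεσ⟩ :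
      ∃ ε : ℝ, 0 < ε ∧ ε ≤ Ω^2/4 ∧ ε ≤ 1/4 ∧ 2*ε*Ω^2 + ε*σ^2 ≤ σ*Ω^2 := by
    refine ⟨min (min (Ω^2) 1 / 4) (σ*Ω^2/(2*Ω^2+σ^2)),
      lt_min (by positivity) (by positivity), ?_, ?_, ?_⟩
    · exact le_trans (min_le_left _ _) (by have := min_le_left (Ω^2) 1; linarith)
    · exact le_trans (min_le_left _ _) (by have := min_le_right (Ω^2) 1; linarith)
    · have h := min_le_right (min (Ω^2) 1 / 4) (σ*Ω^2/(2*Ω^2+σ^2))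
      rw [le_div_iff₀ hden] at h
      linarith
  obtain ⟨κ, hκ0, hκ1, hκ2⟩ : ∃ κ : ℝ, 0 < κ ∧ κ ≤ ε*Ω^2 ∧ κ ≤ σ :=
    ⟨min (ε*Ω^2) σ, lt_min (by positivity) hσ, min_le_left _ _, min_le_right _ _⟩
  obtain ⟨m, M, hm0, hM0, hmM, hQlow, hQup⟩ : ∃ m M : ℝ, 0 < m ∧ 0 < M ∧ m ≤ M ∧
      (∀ a b : ℝ, m*(a^2+b^2) ≤ Ω^2*a^2 + b^2 + 2*ε*(a*b)) ∧
      (∀ a b : ℝ, Ω^2*a^2 + b^2 + 2*ε*(a*b) ≤ M*(a^2+b^2)) := by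
    refine ⟨min (Ω^2) 1 / 2, 3/2 * max (Ω^2) 1, by positivity, by positivity, ?_, ?_, ?_⟩
    · have h1 : (0:ℝ) < min (Ω^2) 1 := by positivity
      have h2 : min (Ω^2) 1 ≤ max (Ω^2) 1 := min_le_max
      linarith
    · intro a b
      linarith [mul_nonneg hε0.le (sq_nonneg (a + b)),
        mul_le_mul_of_nonneg_right hεm1 (sq_nonneg a),
        mul_le_mul_of_nonneg_right hεm2 (sq_nonneg b),
        mul_le_mul_of_nonneg_right (min_le_left (Ω^2) 1) (sq_nonneg a),
        mul_le_mul_of_nonneg_right (min_le_right (Ω^2) 1) (sq_nonneg b),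
        mul_nonneg (sq_nonneg Ω) (sq_nonneg a), sq_nonneg b]
    · intro a b
      linarith [mul_nonneg hε0.le (sq_nonneg (a - b)),
        mul_le_mul_of_nonneg_right hεm1 (sq_nonneg a),
        mul_le_mul_of_nonneg_right hεm2 (sq_nonneg b),
        mul_le_mul_of_nonneg_right (le_max_left (Ω^2) 1) (sq_nonneg a),
        mul_le_mul_of_nonneg_right (le_max_right (Ω^2) 1) (sq_nonneg b),
        mul_nonneg (le_trans zero_le_one (le_max_right (Ω^2) 1)) (sq_nonneg a),
        mul_nonneg (le_trans zero_le_one (le_max_right (Ω^2) 1)) (sq_nonneg b)]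
  obtain ⟨α, hα0, hαM⟩ : ∃ α : ℝ, 0 < α ∧ α*M = κ/2 :=
    ⟨κ/(2*M), by positivity, by field_simp⟩
  obtain ⟨K, hK0, hKκ⟩ : ∃ K : ℝ, 0 ≤ K ∧ K*κ = 2*(c*q)^2*(1+ε^2) :=
    ⟨2*(c*q)^2*(1+ε^2)/κ, by positivity, by field_simp⟩
  refine ⟨Real.sqrt (M/m), Real.sqrt (K/(α*m)+1), α/2,
    Real.sqrt_pos.2 (by positivity), Real.sqrt_pos.2 (by positivity), by positivity, ?_⟩
  intro hbar ω₁ ω₂ Ap A B C₁ C₂ hhbar hω hAp hsol hch t ht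
  -- bound on the driving current
  have hj : ∀ s ∈ Set.Ici (0:ℝ), |c * mbCurrent q C₁ C₂ s| ≤ c*q := by
    intro s hs
    have h1 : |((starRingEnd ℂ) (C₁ s) * C₂ s).im| ≤ ‖C₁ s‖ * ‖C₂ s‖ := by
      refine (Complex.abs_im_le_norm _).trans ?_
      rw [norm_mul]
      simp
    have h2 : 2 * (‖C₁ s‖ * ‖C₂ s‖) ≤ 1 := by
      have := hch s hs
      linarith [sq_nonneg (‖C₁ s‖ - ‖C₂ s‖)]
    have heq : c * mbCurrent q C₁ C₂ s
        = 2*(c*q) * ((starRingEnd ℂ) (C₁ s) * C₂ s).im := by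
      rw [mbCurrent]; ring
    rw [heq, abs_mul, abs_of_pos (by positivity : (0:ℝ) < 2*(c*q))]
    have h3 := mul_le_mul_of_nonneg_left h1 (by positivity : (0:ℝ) ≤ 2*(c*q))
    have h4 := mul_le_mul_of_nonneg_left h2 (le_of_lt (mul_pos hc hq))
    calc 2*(c*q) * |((starRingEnd ℂ) (C₁ s) * C₂ s).im|
        ≤ 2*(c*q) * (‖C₁ s‖ * ‖C₂ s‖) := h3
      _ = (c*q) * (2 * (‖C₁ s‖ * ‖C₂ s‖)) := by ring
      _ ≤ (c*q) * 1 := h4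
      _ = c*q := mul_one _
  set B' : ℝ → ℝ := fun s => -Ω^2 * A s - σ * B s + c * mbCurrent q C₁ C₂ s with hB'def
  set V : ℝ → ℝ := fun s => Ω^2 * (A s)^2 + (B s)^2 + 2*ε*(A s * B s) with hVdef
  set dV : ℝ → ℝ :=
    fun s => 2*Ω^2*(A s * B s) + 2*(B s * B' s) + 2*ε*((B s)^2 + A s * B' s) with hdVdef
  have hVderiv : ∀ s ∈ Set.Ici (0:ℝ), HasDerivAt V (dV s) s := by
    intro s hs
    have h1 := hsol.hA s hs
    have h2 : HasDerivAt B (B' s) s := hsol.hB s hs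
    have key : HasDerivAt (fun u => Ω^2 * (A u * A u) + B u * B u + 2*ε*(A u * B u))
        (Ω^2*(B s * A s + A s * B s) + (B' s * B s + B s * B' s)
          + (2*ε)*(B s * B s + A s * B' s)) s :=
      (((h1.mul h1).const_mul (Ω^2)).add (h2.mul h2)).add ((h1.mul h2).const_mul (2*ε))
    have e : V = fun u => Ω^2 * (A u * A u) + B u * B u + 2*ε*(A u * B u) := by
      funext u; rw [hVdef]; ring
    rw [e]
    convert key using 1
    rw [hdVdef]; ring
  -- dissipation inequality, first for abstract reals
  have hquad : ∀ a b g : ℝ, g^2 ≤ (c*q)^2 →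
      2*Ω^2*(a*b) + 2*(b*(-Ω^2*a - σ*b + g)) + 2*ε*(b^2 + a*(-Ω^2*a - σ*b + g))
        + α*(Ω^2*a^2 + b^2 + 2*ε*(a*b)) ≤ K := by
    intro a b g hg2
    have h1 : 2*Ω^2*(a*b) + 2*(b*(-Ω^2*a - σ*b + g)) + 2*ε*(b^2 + a*(-Ω^2*a - σ*b + g))
        ≤ -κ*(a^2+b^2) + 2*(b*g) + 2*ε*(a*g) := by
      have hmul : Ω^2 * (2*Ω^2*(a*b) + 2*(b*(-Ω^2*a - σ*b + g))
            + 2*ε*(b^2 + a*(-Ω^2*a - σ*b + g)))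
          ≤ Ω^2 * (-κ*(a^2+b^2) + 2*(b*g) + 2*ε*(a*g)) := by
        linarith [mul_nonneg hε0.le (sq_nonneg (Ω^2*a + σ*b)),
          mul_le_mul_of_nonneg_right hεσ (sq_nonneg b),
          mul_le_mul_of_nonneg_right (mul_le_mul_of_nonneg_right hκ1 (sq_nonneg a)) (sq_nonneg Ω),
          mul_le_mul_of_nonneg_right (mul_le_mul_of_nonneg_right hκ2 (sq_nonneg b)) (sq_nonneg Ω)]
      exact le_of_mul_le_mul_left hmul (by positivity)
    have hαV : α*(Ω^2*a^2 + b^2 + 2*ε*(a*b)) ≤ κ/2*(a^2+b^2) := by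
      calc α*(Ω^2*a^2 + b^2 + 2*ε*(a*b)) ≤ α*(M*(a^2+b^2)) :=
            mul_le_mul_of_nonneg_left (hQup a b) hα0.le
        _ = (α*M)*(a^2+b^2) := by ring
        _ = κ/2*(a^2+b^2) := by rw [hαM]
    have h3 : κ*(2*(b*g) + 2*ε*(a*g)) ≤ κ*(κ/2*(a^2+b^2) + K) := by
      have he : κ*(κ/2*(a^2+b^2) + K) = κ^2/2*(a^2+b^2) + K*κ := by ring
      rw [he, hKκ]
      linarith [sq_nonneg (κ*b - 2*g), sq_nonneg (κ*a - 2*ε*g), hg2,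
        mul_le_mul_of_nonneg_left hg2 (sq_nonneg ε)]
    have h4 := le_of_mul_le_mul_left h3 hκ0
    linarith
  have hdiss : ∀ s ∈ Set.Ici (0:ℝ), dV s + α * V s ≤ K := by
    intro s hs
    have hg := hj s hs
    have hg2 : (c * mbCurrent q C₁ C₂ s)^2 ≤ (c*q)^2 :=
      sq_le_sq' (abs_le.1 hg).1 (abs_le.1 hg).2
    have h := hquad (A s) (B s) (c * mbCurrent q C₁ C₂ s) hg2
    simp only [hdVdef, hB'def, hVdef]
    linarith [h]
  have hVlow : ∀ s, m*((A s)^2 + (B s)^2) ≤ V s := by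
    intro s; simp only [hVdef]; exact hQlow (A s) (B s)
  have hVup : ∀ s, V s ≤ M*((A s)^2 + (B s)^2) := by
    intro s; simp only [hVdef]; exact hQup (A s) (B s)
  clear hVdef hdVdef hB'def
  clear_value V dV B'
  -- Lyapunov decay via antitonicity of `W`
  set W : ℝ → ℝ := fun s => (V s - K/α) * Real.exp (α*s) with hWdef
  have hWderiv : ∀ s ∈ Set.Ici (0:ℝ),
      HasDerivAt W (dV s * Real.exp (α*s) + (V s - K/α) * (Real.exp (α*s) * α)) s := by
    intro s hs
    have h0 : HasDerivAt (fun u : ℝ => α*u) α s := by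
      simpa using (hasDerivAt_id s).const_mul α
    have hexp := h0.exp
    exact ((hVderiv s hs).sub_const (K/α)).mul hexp
  have hWanti : AntitoneOn W (Set.Ici 0) := by
    apply antitoneOn_of_deriv_nonpos (convex_Ici 0)
    · exact fun s hs => (hWderiv s hs).continuousAt.continuousWithinAt
    · rw [interior_Ici]
      exact fun s hs => (hWderiv s (Set.mem_Ici.2 (le_of_lt hs))).differentiableAt.differentiableWithinAt
    · intro s hs
      rw [interior_Ici] at hs
      rw [(hWderiv s (Set.mem_Ici.2 hs.le)).deriv]
      have hd := hdiss s (Set.mem_Ici.2 hs.le)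
      have hcancel : α * (K/α) = K := by field_simp
      have hnp : dV s + α*(V s - K/α) ≤ 0 := by linarith [hd, hcancel]
      nlinarith [mul_le_mul_of_nonneg_right hnp (Real.exp_pos (α*s)).le]
  have hVbound : V t ≤ V 0 * (Real.exp (α*t))⁻¹ + K/α := by
    have h := hWanti Set.self_mem_Ici (Set.mem_Ici.2 (le_of_lt ht)) (le_of_lt ht)
    rw [hWdef] at h
    simp only [mul_zero, Real.exp_zero, mul_one] at h
    have hE1 : (1:ℝ) ≤ Real.exp (α*t) := Real.one_le_exp (by positivity)
    have hE0 : (0:ℝ) < Real.exp (α*t) := Real.exp_pos _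
    have hEne : Real.exp (α*t) ≠ 0 := hE0.ne'
    have hKα : (0:ℝ) ≤ K/α := by positivity
    have h2 : V t * Real.exp (α*t) ≤ V 0 + K/α * Real.exp (α*t) := by nlinarith
    calc V t = V t * Real.exp (α*t) * (Real.exp (α*t))⁻¹ := by
          rw [mul_assoc, mul_inv_cancel₀ hEne, mul_one]
      _ ≤ (V 0 + K/α * Real.exp (α*t)) * (Real.exp (α*t))⁻¹ := by gcongr
      _ = V 0 * (Real.exp (α*t))⁻¹ + K/α := by
          rw [add_mul, mul_assoc, mul_inv_cancel₀ hEne, mul_one]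
  -- convert to a bound on A, B
  have hAB : (A t)^2 + (B t)^2
      ≤ M/m*((A 0)^2+(B 0)^2)*(Real.exp (α*t))⁻¹ + K/(α*m) := by
    have h1 := hVlow t
    have h2 := hVup 0
    have hE0 : (0:ℝ) ≤ (Real.exp (α*t))⁻¹ := by positivity
    have h4 : m*((A t)^2+(B t)^2)
        ≤ M*((A 0)^2+(B 0)^2)*(Real.exp (α*t))⁻¹ + K/α := by
      linarith [h1, hVbound, mul_le_mul_of_nonneg_right h2 hE0]
    calc (A t)^2+(B t)^2 = (m*((A t)^2+(B t)^2))/m := by field_simp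
      _ ≤ (M*((A 0)^2+(B 0)^2)*(Real.exp (α*t))⁻¹ + K/α)/m := by gcongr
      _ = M/m*((A 0)^2+(B 0)^2)*(Real.exp (α*t))⁻¹ + K/(α*m) := by
          field_simp
  -- final assembly
  have hcht := hch t (le_of_lt ht)
  have hch0 := hch 0 le_rfl
  have e1 : A t ^ 2 + B t ^ 2 + ‖C₁ t‖ ^ 2 + ‖C₂ t‖ ^ 2 = (A t)^2 + (B t)^2 + 1 := by
    linarith
  have e2 : A 0 ^ 2 + B 0 ^ 2 + ‖C₁ 0‖ ^ 2 + ‖C₂ 0‖ ^ 2 = (A 0)^2 + (B 0)^2 + 1 := by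
    linarith
  rw [e1, e2]
  have hE0 : (0:ℝ) ≤ (Real.exp (α*t))⁻¹ := by positivity
  have hstep : (A t)^2+(B t)^2+1
      ≤ M/m*((A 0)^2+(B 0)^2+1)*(Real.exp (α*t))⁻¹ + (K/(α*m)+1) := by
    linarith [hAB, mul_nonneg (div_nonneg hM0.le hm0.le) hE0]
  have hE2 : (Real.exp (α*t))⁻¹ = (Real.exp (-(α/2)*t))^2 := by
    rw [← Real.exp_neg, sq, ← Real.exp_add]; congr 1; ring
  calc Real.sqrt ((A t)^2+(B t)^2+1)
      ≤ Real.sqrt (M/m*((A 0)^2+(B 0)^2+1)*(Real.exp (α*t))⁻¹ + (K/(α*m)+1)) :=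
        Real.sqrt_le_sqrt hstep
    _ ≤ Real.sqrt (M/m*((A 0)^2+(B 0)^2+1)*(Real.exp (α*t))⁻¹)
          + Real.sqrt (K/(α*m)+1) :=
        sqrt_add_le_aux (by positivity) (by positivity)
    _ = Real.sqrt (M/m) * Real.sqrt ((A 0)^2+(B 0)^2+1) * Real.exp (-(α/2) * t)
          + Real.sqrt (K/(α*m)+1) := by
        rw [Real.sqrt_mul (by positivity : (0:ℝ) ≤ M/m*((A 0)^2+(B 0)^2+1)),
          Real.sqrt_mul (by positivity : (0:ℝ) ≤ M/m), hE2,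
          Real.sqrt_sq (Real.exp_nonneg _)]
end

section
/- Let the pumping A_p : [0,∞) → ℝ be continuous. Then for every initial state (A⁰, B⁰, C₁⁰, C₂⁰) ∈ ℝ² × ℂ² with |C₁⁰|² + |C₂⁰|² = 1, the Maxwell–Bloch system with one two-level molecule admits a unique global solution (A, B, C₁, C₂) on [0,∞) with (A(0), B(0), C₁(0), C₂(0)) = (A⁰, B⁰, C₁⁰, C₂⁰), and this solution satisfies |C₁(t)|² + |C₂(t)|² = 1 for all t ≥ 0. -/
set_option maxHeartbeats 1000000
open Set



namespace MBTools



abbrev MBE : Type := ℝ × ℝ × ℂ × ℂ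

noncomputable def trunc (R a : ℝ) : ℝ := max (-R) (min R a)

lemma abs_min_sub_min (c a b : ℝ) : |min c a - min c b| ≤ |a - b| := by
  have h1 := le_abs_self (a - b); have h2 := neg_abs_le (a - b)
  rcases le_total c a with ha | ha <;> rcases le_total c b with hb | hb
  · rw [min_eq_left ha, min_eq_left hb]; simp [abs_nonneg]
  · rw [min_eq_left ha, min_eq_right hb, abs_le]; constructor <;> linarith
  · rw [min_eq_right ha, min_eq_left hb, abs_le]; constructor <;> linarith
  · rw [min_eq_right ha, min_eq_right hb]

lemma abs_max_sub_max (c a b : ℝ) : |max c a - max c b| ≤ |a - b| := by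
  have h1 := le_abs_self (a - b); have h2 := neg_abs_le (a - b)
  rcases le_total c a with ha | ha <;> rcases le_total c b with hb | hb
  · rw [max_eq_right ha, max_eq_right hb]
  · rw [max_eq_right ha, max_eq_left hb, abs_le]; constructor <;> linarith
  · rw [max_eq_left ha, max_eq_right hb, abs_le]; constructor <;> linarith
  · rw [max_eq_left ha, max_eq_left hb]; simp [abs_nonneg]

lemma trunc_lip (R a b : ℝ) : |trunc R a - trunc R b| ≤ |a - b| :=
  (abs_max_sub_max (-R) _ _).trans (abs_min_sub_min R a b)

lemma trunc_zero (R : ℝ) (hR : 0 ≤ R) : trunc R 0 = 0 := by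
  simp [trunc, min_eq_right hR, neg_nonpos.2 hR]

lemma trunc_abs_le' (R a : ℝ) (hR : 0 ≤ R) : |trunc R a| ≤ |a| := by
  have := trunc_lip R a 0
  rwa [trunc_zero R hR, sub_zero, sub_zero] at this

lemma trunc_eq (R a : ℝ) (h : |a| ≤ R) : trunc R a = a := by
  rw [abs_le] at h
  rw [trunc, min_eq_right h.2, max_eq_right h.1]

/-- squared charge -/
noncomputable def nsq (x : MBE) : ℝ := ‖x.2.2.1‖ ^ 2 + ‖x.2.2.2‖ ^ 2

/-- joint truncation scalar -/
noncomputable def lam (x : MBE) : ℝ := 2 / (1 + nsq x)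

lemma nsq_nonneg (x : MBE) : 0 ≤ nsq x := by unfold nsq; positivity

lemma one_add_nsq_pos (x : MBE) : 0 < 1 + nsq x := by unfold nsq; positivity

lemma lam_pos (x : MBE) : 0 < lam x := by
  have := one_add_nsq_pos x; exact div_pos two_pos this

lemma lam_le_two (x : MBE) : lam x ≤ 2 := by
  rw [lam, div_le_iff₀ (one_add_nsq_pos x)]
  nlinarith [nsq_nonneg x]

lemma lam_mul_fst (x : MBE) : lam x * ‖x.2.2.1‖ ≤ 1 := by
  rw [lam, div_mul_eq_mul_div, div_le_one (one_add_nsq_pos x), nsq]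
  nlinarith [sq_nonneg (‖x.2.2.1‖ - 1), sq_nonneg ‖x.2.2.2‖]

lemma lam_mul_snd (x : MBE) : lam x * ‖x.2.2.2‖ ≤ 1 := by
  rw [lam, div_mul_eq_mul_div, div_le_one (one_add_nsq_pos x), nsq]
  nlinarith [sq_nonneg (‖x.2.2.2‖ - 1), sq_nonneg ‖x.2.2.1‖]

lemma lam_mul_mul (x : MBE) : lam x * (‖x.2.2.1‖ * ‖x.2.2.2‖) ≤ 1 := by
  rw [lam, div_mul_eq_mul_div, div_le_one (one_add_nsq_pos x), nsq]
  nlinarith [sq_nonneg (‖x.2.2.1‖ - ‖x.2.2.2‖), norm_nonneg x.2.2.1, norm_nonneg x.2.2.2]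

/-- distance control on coordinates -/
lemma dist_c1 (x y : MBE) : dist x.2.2.1 y.2.2.1 ≤ dist x y := by
  calc dist x.2.2.1 y.2.2.1 ≤ dist x.2.2 y.2.2 := by
        rw [Prod.dist_eq]; exact le_max_left _ _
    _ ≤ dist x.2 y.2 := by rw [Prod.dist_eq]; exact le_max_right _ _
    _ ≤ dist x y := by rw [Prod.dist_eq]; exact le_max_right _ _

lemma dist_c2 (x y : MBE) : dist x.2.2.2 y.2.2.2 ≤ dist x y := by
  calc dist x.2.2.2 y.2.2.2 ≤ dist x.2.2 y.2.2 := by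
        rw [Prod.dist_eq]; exact le_max_right _ _
    _ ≤ dist x.2 y.2 := by rw [Prod.dist_eq]; exact le_max_right _ _
    _ ≤ dist x y := by rw [Prod.dist_eq]; exact le_max_right _ _

lemma dist_A (x y : MBE) : dist x.1 y.1 ≤ dist x y := by
  rw [Prod.dist_eq]; exact le_max_left _ _

lemma dist_B (x y : MBE) : dist x.2.1 y.2.1 ≤ dist x y := by
  calc dist x.2.1 y.2.1 ≤ dist x.2 y.2 := by rw [Prod.dist_eq]; exact le_max_left _ _
    _ ≤ dist x y := by rw [Prod.dist_eq]; exact le_max_right _ _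

lemma lam_core (a b a' b' d : ℝ) (ha : 0 ≤ a) (hb : 0 ≤ b) (ha' : 0 ≤ a') (hb' : 0 ≤ b')
    (hd : 0 ≤ d) (h1 : |a - a'| ≤ d) (h2 : |b - b'| ≤ d) :
    |2 / (1 + (a ^ 2 + b ^ 2)) - 2 / (1 + (a' ^ 2 + b' ^ 2))| * max 1 (max a' b') ≤ 8 * d := by
  set P := 1 + (a ^ 2 + b ^ 2) with hPdef
  set Q := 1 + (a' ^ 2 + b' ^ 2) with hQdef
  have hP : (0:ℝ) < P := by positivity
  have hQ : (0:ℝ) < Q := by positivity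
  have heq : 2 / P - 2 / Q = 2 * ((a' ^ 2 + b' ^ 2) - (a ^ 2 + b ^ 2)) / (P * Q) := by
    field_simp; ring
  rw [heq, abs_div, abs_of_pos (mul_pos hP hQ), div_mul_eq_mul_div, div_le_iff₀ (mul_pos hP hQ)]
  have hDN : |(a' ^ 2 + b' ^ 2) - (a ^ 2 + b ^ 2)| ≤ d * (a + a' + b + b') := by
    have e : (a' ^ 2 + b' ^ 2) - (a ^ 2 + b ^ 2) = (a' - a) * (a + a') + (b' - b) * (b + b') := by ring
    rw [e]
    calc |(a' - a) * (a + a') + (b' - b) * (b + b')|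
        ≤ |(a' - a) * (a + a')| + |(b' - b) * (b + b')| := abs_add_le _ _
      _ = |a' - a| * (a + a') + |b' - b| * (b + b') := by
          rw [abs_mul, abs_mul, _root_.abs_of_nonneg (by linarith : (0:ℝ) ≤ a + a'),
            _root_.abs_of_nonneg (by linarith : (0:ℝ) ≤ b + b')]
      _ ≤ d * (a + a') + d * (b + b') := by
          rw [abs_sub_comm a' a, abs_sub_comm b' b]
          gcongr
      _ = d * (a + a' + b + b') := by ring
  have habs : |2 * ((a' ^ 2 + b' ^ 2) - (a ^ 2 + b ^ 2))| ≤ 2 * (d * (a + a' + b + b')) := by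
    rw [abs_mul, (by norm_num : |(2:ℝ)| = 2)]
    linarith [hDN]
  refine le_trans (mul_le_mul_of_nonneg_right habs (le_trans zero_le_one (le_max_left _ _))) ?_
  -- basic product facts
  have h2a : 2 * a ≤ P := by rw [hPdef]; nlinarith [sq_nonneg (a - 1)]
  have h2b : 2 * b ≤ P := by rw [hPdef]; nlinarith [sq_nonneg (b - 1)]
  have h2a' : 2 * a' ≤ Q := by rw [hQdef]; nlinarith [sq_nonneg (a' - 1)]
  have h2b' : 2 * b' ≤ Q := by rw [hQdef]; nlinarith [sq_nonneg (b' - 1)]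
  have hPQ : 0 ≤ P * Q := le_of_lt (mul_pos hP hQ)
  have hP1 : 1 ≤ P := by rw [hPdef]; nlinarith
  have hQ1 : 1 ≤ Q := by rw [hQdef]; nlinarith
  have hPle : P ≤ P * Q := by nlinarith [mul_nonneg hP.le (by linarith : (0:ℝ) ≤ Q - 1)]
  have hQle : Q ≤ P * Q := by nlinarith [mul_nonneg hQ.le (by linarith : (0:ℝ) ≤ P - 1)]
  have haa' : 4 * (a * a') ≤ P * Q := by nlinarith [mul_le_mul h2a h2a' (by linarith) (le_of_lt hP)]
  have hba' : 4 * (b * a') ≤ P * Q := by nlinarith [mul_le_mul h2b h2a' (by linarith) (le_of_lt hP)]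
  have hab' : 4 * (a * b') ≤ P * Q := by nlinarith [mul_le_mul h2a h2b' (by linarith) (le_of_lt hP)]
  have hbb' : 4 * (b * b') ≤ P * Q := by nlinarith [mul_le_mul h2b h2b' (by linarith) (le_of_lt hP)]
  have ha'a' : a' * a' ≤ P * Q := by
    have h : a' * a' ≤ Q := by rw [hQdef]; nlinarith
    linarith
  have hb'b' : b' * b' ≤ P * Q := by
    have h : b' * b' ≤ Q := by rw [hQdef]; nlinarith
    linarith
  have ha'b' : 2 * (a' * b') ≤ P * Q := by
    have h : 2 * (a' * b') ≤ Q := by rw [hQdef]; nlinarith [sq_nonneg (a' - b')]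
    linarith
  rcases max_cases 1 (max a' b') with ⟨hm, _⟩ | ⟨hm, _⟩
  · rw [hm, mul_one]
    have key : a + a' + b + b' ≤ 4 * (P * Q) := by linarith
    refine le_trans ?_ (le_of_eq (by ring : 2 * d * (4 * (P * Q)) = 8 * d * (P * Q)))
    rw [show 2 * (d * (a + a' + b + b')) = 2 * d * (a + a' + b + b') by ring]
    exact mul_le_mul_of_nonneg_left key (by linarith)
  · rcases max_cases a' b' with ⟨hn, _⟩ | ⟨hn, _⟩ <;> rw [hm, hn]
    · have key : (a + a' + b + b') * a' ≤ 4 * (P * Q) := by nlinarith [haa', hba', ha'a', ha'b']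
      nlinarith [mul_le_mul_of_nonneg_left key (show (0:ℝ) ≤ 2 * d by linarith)]
    · have key : (a + a' + b + b') * b' ≤ 4 * (P * Q) := by nlinarith [hab', hbb', hb'b', ha'b']
      nlinarith [mul_le_mul_of_nonneg_left key (show (0:ℝ) ≤ 2 * d by linarith)]

/-- the true Maxwell–Bloch vector field -/
noncomputable def Ftrue (Om sg cj al om1 om2 : ℝ) (Ap : ℝ → ℝ) (t : ℝ) (x : MBE) : MBE :=
  (x.2.1,
   -Om ^ 2 * x.1 - sg * x.2.1 + cj * ((starRingEnd ℂ) x.2.2.1 * x.2.2.2).im,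
   -(om1 : ℂ) * Complex.I * x.2.2.1 + ((al * (x.1 + Ap t) : ℝ) : ℂ) * x.2.2.2,
   -(om2 : ℂ) * Complex.I * x.2.2.2 - ((al * (x.1 + Ap t) : ℝ) : ℂ) * x.2.2.1)

/-- the truncated (globally Lipschitz) field -/
noncomputable def Ftr (Om sg cj al om1 om2 R : ℝ) (Ap : ℝ → ℝ) (t : ℝ) (x : MBE) : MBE :=
  (x.2.1,
   -Om ^ 2 * x.1 - sg * x.2.1 + cj * (lam x * lam x * ((starRingEnd ℂ) x.2.2.1 * x.2.2.2).im),
   -(om1 : ℂ) * Complex.I * x.2.2.1 + ((al * (trunc R x.1 + Ap t) * lam x : ℝ) : ℂ) * x.2.2.2,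
   -(om2 : ℂ) * Complex.I * x.2.2.2 - ((al * (trunc R x.1 + Ap t) * lam x : ℝ) : ℂ) * x.2.2.1)

lemma lam_eq_one {x : MBE} (h : nsq x = 1) : lam x = 1 := by
  rw [lam, h]; norm_num

lemma Ftr_eq_Ftrue (Om sg cj al om1 om2 R : ℝ) (Ap : ℝ → ℝ) (t : ℝ) (x : MBE)
    (h1 : nsq x = 1) (h2 : |x.1| ≤ R) :
    Ftr Om sg cj al om1 om2 R Ap t x = Ftrue Om sg cj al om1 om2 Ap t x := by
  rw [Ftr, Ftrue, lam_eq_one h1, trunc_eq R x.1 h2]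
  norm_num

lemma Ftr_zero (Om sg cj al om1 om2 R : ℝ) (Ap : ℝ → ℝ) (t : ℝ) :
    Ftr Om sg cj al om1 om2 R Ap t 0 = 0 := by
  have h1 : (0 : MBE).1 = 0 := rfl
  have h2 : (0 : MBE).2.1 = 0 := rfl
  have h3 : (0 : MBE).2.2.1 = 0 := rfl
  have h4 : (0 : MBE).2.2.2 = 0 := rfl
  rw [Ftr, h1, h2, h3, h4]
  norm_num

/-! lam difference corollaries -/

lemma norm_sub_le_dist_c1 (x y : MBE) : |‖x.2.2.1‖ - ‖y.2.2.1‖| ≤ dist x y :=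
  (abs_norm_sub_norm_le _ _).trans (by rw [← dist_eq_norm]; exact dist_c1 x y)

lemma norm_sub_le_dist_c2 (x y : MBE) : |‖x.2.2.2‖ - ‖y.2.2.2‖| ≤ dist x y :=
  (abs_norm_sub_norm_le _ _).trans (by rw [← dist_eq_norm]; exact dist_c2 x y)

lemma lam_sub_mul (x y : MBE) :
    |lam x - lam y| * max 1 (max ‖y.2.2.1‖ ‖y.2.2.2‖) ≤ 8 * dist x y := by
  have := lam_core ‖x.2.2.1‖ ‖x.2.2.2‖ ‖y.2.2.1‖ ‖y.2.2.2‖ (dist x y)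
    (norm_nonneg _) (norm_nonneg _) (norm_nonneg _) (norm_nonneg _) dist_nonneg
    (norm_sub_le_dist_c1 x y) (norm_sub_le_dist_c2 x y)
  simpa [lam, nsq] using this

lemma lam_diff (x y : MBE) : |lam x - lam y| ≤ 8 * dist x y := by
  have h := lam_sub_mul x y
  nlinarith [abs_nonneg (lam x - lam y), le_max_left 1 (max ‖y.2.2.1‖ ‖y.2.2.2‖),
    mul_le_mul_of_nonneg_left (le_max_left 1 (max ‖y.2.2.1‖ ‖y.2.2.2‖)) (abs_nonneg (lam x - lam y))]

lemma lam_diff_mul₁ (x y : MBE) : |lam x - lam y| * ‖y.2.2.1‖ ≤ 8 * dist x y := by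
  refine le_trans ?_ (lam_sub_mul x y)
  exact mul_le_mul_of_nonneg_left ((le_max_left _ _).trans (le_max_right _ _)) (abs_nonneg _)

lemma lam_diff_mul₂ (x y : MBE) : |lam x - lam y| * ‖y.2.2.2‖ ≤ 8 * dist x y := by
  refine le_trans ?_ (lam_sub_mul x y)
  exact mul_le_mul_of_nonneg_left ((le_max_right _ _).trans (le_max_right _ _)) (abs_nonneg _)

/-! imaginary-part helpers -/

lemma im_mul_le (z w : ℂ) : |((starRingEnd ℂ) z * w).im| ≤ ‖z‖ * ‖w‖ := by
  calc |((starRingEnd ℂ) z * w).im| ≤ ‖(starRingEnd ℂ) z * w‖ := Complex.abs_im_le_norm _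
    _ = ‖z‖ * ‖w‖ := by rw [norm_mul, Complex.norm_conj]

lemma im_diff_le (x y : MBE) :
    |((starRingEnd ℂ) x.2.2.1 * x.2.2.2).im - ((starRingEnd ℂ) y.2.2.1 * y.2.2.2).im|
      ≤ (‖x.2.2.1‖ + ‖y.2.2.2‖) * dist x y := by
  have e : (starRingEnd ℂ) x.2.2.1 * x.2.2.2 - (starRingEnd ℂ) y.2.2.1 * y.2.2.2
      = (starRingEnd ℂ) x.2.2.1 * (x.2.2.2 - y.2.2.2)
        + (starRingEnd ℂ) (x.2.2.1 - y.2.2.1) * y.2.2.2 := by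
    rw [map_sub]; ring
  have h1 : ((starRingEnd ℂ) x.2.2.1 * x.2.2.2).im - ((starRingEnd ℂ) y.2.2.1 * y.2.2.2).im
      = ((starRingEnd ℂ) x.2.2.1 * (x.2.2.2 - y.2.2.2)).im
        + ((starRingEnd ℂ) (x.2.2.1 - y.2.2.1) * y.2.2.2).im := by
    rw [← Complex.sub_im, e, Complex.add_im]
  rw [h1]
  calc |((starRingEnd ℂ) x.2.2.1 * (x.2.2.2 - y.2.2.2)).im
        + ((starRingEnd ℂ) (x.2.2.1 - y.2.2.1) * y.2.2.2).im|
      ≤ |((starRingEnd ℂ) x.2.2.1 * (x.2.2.2 - y.2.2.2)).im|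
        + |((starRingEnd ℂ) (x.2.2.1 - y.2.2.1) * y.2.2.2).im| := abs_add_le _ _
    _ ≤ ‖x.2.2.1‖ * ‖x.2.2.2 - y.2.2.2‖ + ‖x.2.2.1 - y.2.2.1‖ * ‖y.2.2.2‖ := by
        gcongr <;> exact im_mul_le _ _
    _ ≤ ‖x.2.2.1‖ * dist x y + dist x y * ‖y.2.2.2‖ := by
        gcongr
        · rw [← dist_eq_norm]; exact dist_c2 x y
        · rw [← dist_eq_norm]; exact dist_c1 x y
    _ = (‖x.2.2.1‖ + ‖y.2.2.2‖) * dist x y := by ring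

/-- difference bound for `λ²·Im(conj C₁ C₂)` -/
lemma lamsq_im_diff (x y : MBE) :
    |lam x * lam x * ((starRingEnd ℂ) x.2.2.1 * x.2.2.2).im
      - lam y * lam y * ((starRingEnd ℂ) y.2.2.1 * y.2.2.2).im| ≤ 20 * dist x y := by
  set Ix := ((starRingEnd ℂ) x.2.2.1 * x.2.2.2).im with hIx
  set Iy := ((starRingEnd ℂ) y.2.2.1 * y.2.2.2).im with hIy
  have e : lam x * lam x * Ix - lam y * lam y * Iy
      = lam x * lam y * (Ix - Iy) + lam x * Ix * (lam x - lam y)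
        + lam y * Iy * (lam x - lam y) := by ring
  have hIxb : |Ix| ≤ ‖x.2.2.1‖ * ‖x.2.2.2‖ := im_mul_le _ _
  have hIyb : |Iy| ≤ ‖y.2.2.1‖ * ‖y.2.2.2‖ := im_mul_le _ _
  have hlx := lam_pos x; have hly := lam_pos y
  have hlx2 := lam_le_two x; have hly2 := lam_le_two y
  have hd : (0:ℝ) ≤ dist x y := dist_nonneg
  have t1 : |lam x * lam y * (Ix - Iy)| ≤ 4 * dist x y := by
    rw [abs_mul, _root_.abs_of_nonneg (by positivity : (0:ℝ) ≤ lam x * lam y)]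
    calc lam x * lam y * |Ix - Iy| ≤ lam x * lam y * ((‖x.2.2.1‖ + ‖y.2.2.2‖) * dist x y) :=
          mul_le_mul_of_nonneg_left (im_diff_le x y) (by positivity)
      _ = (lam x * ‖x.2.2.1‖) * lam y * dist x y + (lam y * ‖y.2.2.2‖) * lam x * dist x y := by ring
      _ ≤ 1 * 2 * dist x y + 1 * 2 * dist x y := by
          gcongr <;> first | exact lam_mul_fst x | exact lam_mul_snd y | assumption
      _ = 4 * dist x y := by ring
  have t2 : |lam x * Ix * (lam x - lam y)| ≤ 8 * dist x y := by
    rw [abs_mul, abs_mul, _root_.abs_of_nonneg hlx.le]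
    have h1 : lam x * |Ix| ≤ 1 :=
      le_trans (mul_le_mul_of_nonneg_left hIxb hlx.le) (lam_mul_mul x)
    calc lam x * |Ix| * |lam x - lam y| ≤ 1 * |lam x - lam y| := by gcongr
      _ = |lam x - lam y| := one_mul _
      _ ≤ 8 * dist x y := lam_diff x y
  have t3 : |lam y * Iy * (lam x - lam y)| ≤ 8 * dist x y := by
    rw [abs_mul, abs_mul, _root_.abs_of_nonneg hly.le]
    have h1 : lam y * |Iy| ≤ 1 :=
      le_trans (mul_le_mul_of_nonneg_left hIyb hly.le) (lam_mul_mul y)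
    calc lam y * |Iy| * |lam x - lam y| ≤ 1 * |lam x - lam y| := by gcongr
      _ = |lam x - lam y| := one_mul _
      _ ≤ 8 * dist x y := lam_diff x y
  calc |lam x * lam x * Ix - lam y * lam y * Iy|
      = |lam x * lam y * (Ix - Iy) + lam x * Ix * (lam x - lam y)
          + lam y * Iy * (lam x - lam y)| := by rw [e]
    _ ≤ |lam x * lam y * (Ix - Iy) + lam x * Ix * (lam x - lam y)|
          + |lam y * Iy * (lam x - lam y)| := abs_add_le _ _
    _ ≤ |lam x * lam y * (Ix - Iy)| + |lam x * Ix * (lam x - lam y)|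
          + |lam y * Iy * (lam x - lam y)| := by gcongr; exact abs_add_le _ _
    _ ≤ 4 * dist x y + 8 * dist x y + 8 * dist x y := by gcongr
    _ = 20 * dist x y := by ring

/-! component-norm helpers -/

lemma norm_A_le (x : MBE) : |x.1| ≤ ‖x‖ := by
  simpa [Real.dist_eq, dist_zero_right, Real.norm_eq_abs] using dist_A x 0

lemma norm_B_le (x : MBE) : |x.2.1| ≤ ‖x‖ := by
  simpa [Real.dist_eq, dist_zero_right, Real.norm_eq_abs] using dist_B x 0

lemma norm_c1_le (x : MBE) : ‖x.2.2.1‖ ≤ ‖x‖ := by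
  simpa [dist_zero_right, dist_eq_norm] using dist_c1 x 0

lemma norm_c2_le (x : MBE) : ‖x.2.2.2‖ ≤ ‖x‖ := by
  simpa [dist_zero_right, dist_eq_norm] using dist_c2 x 0

/-! scaled second/first components -/

noncomputable def Psi1 (x : MBE) : ℂ := ((lam x : ℝ) : ℂ) * x.2.2.1
noncomputable def Psi2 (x : MBE) : ℂ := ((lam x : ℝ) : ℂ) * x.2.2.2

lemma psi1_norm (x : MBE) : ‖Psi1 x‖ ≤ 1 := by
  rw [Psi1, norm_mul, Complex.norm_real, Real.norm_eq_abs,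
    _root_.abs_of_nonneg (lam_pos x).le]
  exact lam_mul_fst x

lemma psi2_norm (x : MBE) : ‖Psi2 x‖ ≤ 1 := by
  rw [Psi2, norm_mul, Complex.norm_real, Real.norm_eq_abs,
    _root_.abs_of_nonneg (lam_pos x).le]
  exact lam_mul_snd x

lemma psi1_diff (x y : MBE) : ‖Psi1 x - Psi1 y‖ ≤ 10 * dist x y := by
  have e : Psi1 x - Psi1 y
      = ((lam x : ℝ) : ℂ) * (x.2.2.1 - y.2.2.1) + ((lam x - lam y : ℝ) : ℂ) * y.2.2.1 := by
    rw [Psi1, Psi1]; push_cast; ring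
  rw [e]
  calc ‖((lam x : ℝ) : ℂ) * (x.2.2.1 - y.2.2.1) + ((lam x - lam y : ℝ) : ℂ) * y.2.2.1‖
      ≤ ‖((lam x : ℝ) : ℂ) * (x.2.2.1 - y.2.2.1)‖ + ‖((lam x - lam y : ℝ) : ℂ) * y.2.2.1‖ :=
        norm_add_le _ _
    _ = |lam x| * ‖x.2.2.1 - y.2.2.1‖ + |lam x - lam y| * ‖y.2.2.1‖ := by
        rw [norm_mul, norm_mul, Complex.norm_real, Complex.norm_real, Real.norm_eq_abs,
          Real.norm_eq_abs]
    _ ≤ 2 * dist x y + 8 * dist x y := by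
        refine add_le_add ?_ (lam_diff_mul₁ x y)
        rw [_root_.abs_of_nonneg (lam_pos x).le]
        exact mul_le_mul (lam_le_two x) (by rw [← dist_eq_norm]; exact dist_c1 x y)
          (norm_nonneg _) (by norm_num)
    _ = 10 * dist x y := by ring

lemma psi2_diff (x y : MBE) : ‖Psi2 x - Psi2 y‖ ≤ 10 * dist x y := by
  have e : Psi2 x - Psi2 y
      = ((lam x : ℝ) : ℂ) * (x.2.2.2 - y.2.2.2) + ((lam x - lam y : ℝ) : ℂ) * y.2.2.2 := by
    rw [Psi2, Psi2]; push_cast; ring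
  rw [e]
  calc ‖((lam x : ℝ) : ℂ) * (x.2.2.2 - y.2.2.2) + ((lam x - lam y : ℝ) : ℂ) * y.2.2.2‖
      ≤ ‖((lam x : ℝ) : ℂ) * (x.2.2.2 - y.2.2.2)‖ + ‖((lam x - lam y : ℝ) : ℂ) * y.2.2.2‖ :=
        norm_add_le _ _
    _ = |lam x| * ‖x.2.2.2 - y.2.2.2‖ + |lam x - lam y| * ‖y.2.2.2‖ := by
        rw [norm_mul, norm_mul, Complex.norm_real, Complex.norm_real, Real.norm_eq_abs,
          Real.norm_eq_abs]
    _ ≤ 2 * dist x y + 8 * dist x y := by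
        refine add_le_add ?_ (lam_diff_mul₂ x y)
        rw [_root_.abs_of_nonneg (lam_pos x).le]
        exact mul_le_mul (lam_le_two x) (by rw [← dist_eq_norm]; exact dist_c2 x y)
          (norm_nonneg _) (by norm_num)
    _ = 10 * dist x y := by ring

lemma trunc_abs_le (R a : ℝ) (hR : 0 ≤ R) : |trunc R a| ≤ R := by
  rw [abs_le]; refine ⟨le_max_left _ _, max_le (by linarith) (min_le_left _ _)⟩

lemma lamsq_im_le (x : MBE) :
    |lam x * lam x * ((starRingEnd ℂ) x.2.2.1 * x.2.2.2).im| ≤ 1 := by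
  have hIxb := im_mul_le x.2.2.1 x.2.2.2
  have hl := lam_pos x
  rw [abs_mul, _root_.abs_of_nonneg (by positivity : (0:ℝ) ≤ lam x * lam x)]
  calc lam x * lam x * |((starRingEnd ℂ) x.2.2.1 * x.2.2.2).im|
      ≤ lam x * lam x * (‖x.2.2.1‖ * ‖x.2.2.2‖) := by
        exact mul_le_mul_of_nonneg_left hIxb (by positivity)
    _ = (lam x * ‖x.2.2.1‖) * (lam x * ‖x.2.2.2‖) := by ring
    _ ≤ 1 := mul_le_one₀ (lam_mul_fst x) (by positivity) (lam_mul_snd x)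

/-- coupling coefficient bounds -/
lemma coef_abs_le (al R M Apt a : ℝ) (hal : 0 ≤ al) (hR : 0 ≤ R) (hApt : |Apt| ≤ M) :
    |al * (trunc R a + Apt)| ≤ al * (R + M) := by
  rw [abs_mul, _root_.abs_of_nonneg hal]
  refine mul_le_mul_of_nonneg_left ?_ hal
  calc |trunc R a + Apt| ≤ |trunc R a| + |Apt| := abs_add_le _ _
    _ ≤ R + M := add_le_add (trunc_abs_le R a hR) hApt

lemma coef_diff_le (al R M Apt : ℝ) (hal : 0 ≤ al) (x y : MBE) :
    |al * (trunc R x.1 + Apt) - al * (trunc R y.1 + Apt)| ≤ al * dist x y := by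
  have e : al * (trunc R x.1 + Apt) - al * (trunc R y.1 + Apt)
      = al * (trunc R x.1 - trunc R y.1) := by ring
  rw [e, abs_mul, _root_.abs_of_nonneg hal]
  refine mul_le_mul_of_nonneg_left ?_ hal
  exact (trunc_lip R x.1 y.1).trans (by rw [← Real.dist_eq]; exact dist_A x y)

lemma coupling_diff₂ (al R M Apt : ℝ) (hal : 0 ≤ al) (hR : 0 ≤ R) (hApt : |Apt| ≤ M)
    (x y : MBE) :
    ‖((al * (trunc R x.1 + Apt) * lam x : ℝ) : ℂ) * x.2.2.2
      - ((al * (trunc R y.1 + Apt) * lam y : ℝ) : ℂ) * y.2.2.2‖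
      ≤ (al * (R + M) * 10 + al) * dist x y := by
  set sx := al * (trunc R x.1 + Apt) with hsx
  set sy := al * (trunc R y.1 + Apt) with hsy
  have e : ((sx * lam x : ℝ) : ℂ) * x.2.2.2 - ((sy * lam y : ℝ) : ℂ) * y.2.2.2
      = ((sx : ℝ) : ℂ) * (Psi2 x - Psi2 y) + ((sx - sy : ℝ) : ℂ) * Psi2 y := by
    rw [Psi2, Psi2]; push_cast; ring
  rw [e]
  calc ‖((sx : ℝ) : ℂ) * (Psi2 x - Psi2 y) + ((sx - sy : ℝ) : ℂ) * Psi2 y‖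
      ≤ ‖((sx : ℝ) : ℂ) * (Psi2 x - Psi2 y)‖ + ‖((sx - sy : ℝ) : ℂ) * Psi2 y‖ := norm_add_le _ _
    _ = |sx| * ‖Psi2 x - Psi2 y‖ + |sx - sy| * ‖Psi2 y‖ := by
        rw [norm_mul, norm_mul, Complex.norm_real, Complex.norm_real, Real.norm_eq_abs,
          Real.norm_eq_abs]
    _ ≤ (al * (R + M)) * (10 * dist x y) + (al * dist x y) * 1 := by
        refine add_le_add ?_ ?_
        · exact mul_le_mul (coef_abs_le al R M Apt x.1 hal hR hApt) (psi2_diff x y)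
            (norm_nonneg _) (mul_nonneg hal (add_nonneg hR ((abs_nonneg _).trans hApt)))
        · exact mul_le_mul (coef_diff_le al R M Apt hal x y) (psi2_norm y) (norm_nonneg _)
            (mul_nonneg hal dist_nonneg)
    _ = (al * (R + M) * 10 + al) * dist x y := by ring

lemma coupling_diff₁ (al R M Apt : ℝ) (hal : 0 ≤ al) (hR : 0 ≤ R) (hApt : |Apt| ≤ M)
    (x y : MBE) :
    ‖((al * (trunc R x.1 + Apt) * lam x : ℝ) : ℂ) * x.2.2.1
      - ((al * (trunc R y.1 + Apt) * lam y : ℝ) : ℂ) * y.2.2.1‖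
      ≤ (al * (R + M) * 10 + al) * dist x y := by
  set sx := al * (trunc R x.1 + Apt) with hsx
  set sy := al * (trunc R y.1 + Apt) with hsy
  have e : ((sx * lam x : ℝ) : ℂ) * x.2.2.1 - ((sy * lam y : ℝ) : ℂ) * y.2.2.1
      = ((sx : ℝ) : ℂ) * (Psi1 x - Psi1 y) + ((sx - sy : ℝ) : ℂ) * Psi1 y := by
    rw [Psi1, Psi1]; push_cast; ring
  rw [e]
  calc ‖((sx : ℝ) : ℂ) * (Psi1 x - Psi1 y) + ((sx - sy : ℝ) : ℂ) * Psi1 y‖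
      ≤ ‖((sx : ℝ) : ℂ) * (Psi1 x - Psi1 y)‖ + ‖((sx - sy : ℝ) : ℂ) * Psi1 y‖ := norm_add_le _ _
    _ = |sx| * ‖Psi1 x - Psi1 y‖ + |sx - sy| * ‖Psi1 y‖ := by
        rw [norm_mul, norm_mul, Complex.norm_real, Complex.norm_real, Real.norm_eq_abs,
          Real.norm_eq_abs]
    _ ≤ (al * (R + M)) * (10 * dist x y) + (al * dist x y) * 1 := by
        refine add_le_add ?_ ?_
        · exact mul_le_mul (coef_abs_le al R M Apt x.1 hal hR hApt) (psi1_diff x y)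
            (norm_nonneg _) (mul_nonneg hal (add_nonneg hR ((abs_nonneg _).trans hApt)))
        · exact mul_le_mul (coef_diff_le al R M Apt hal x y) (psi1_norm y) (norm_nonneg _)
            (mul_nonneg hal dist_nonneg)
    _ = (al * (R + M) * 10 + al) * dist x y := by ring

/-- Lipschitz constant for the truncated field -/
noncomputable def lipC (Om sg cj al om1 om2 R M : ℝ) : ℝ :=
  Om ^ 2 + sg + 1 + 20 * cj + |om1| + |om2| + al * (R + M) * 10 + al

lemma lipC_nonneg {Om sg cj al om1 om2 R M : ℝ} (hsg : 0 ≤ sg) (hcj : 0 ≤ cj) (hal : 0 ≤ al)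
    (hR : 0 ≤ R) (hM : 0 ≤ M) : 0 ≤ lipC Om sg cj al om1 om2 R M := by
  rw [lipC]; positivity

lemma Ftr_lipschitzWith (Om sg cj al om1 om2 R M : ℝ) (hsg : 0 ≤ sg) (hcj : 0 ≤ cj)
    (hal : 0 ≤ al) (hR : 0 ≤ R) (hM : 0 ≤ M) (Ap : ℝ → ℝ) (t : ℝ) (hApt : |Ap t| ≤ M) :
    LipschitzWith (Real.toNNReal (lipC Om sg cj al om1 om2 R M))
      (Ftr Om sg cj al om1 om2 R Ap t) := by
  apply LipschitzWith.of_dist_le_mul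
  intro x y
  rw [Real.coe_toNNReal _ (lipC_nonneg hsg hcj hal hR hM)]
  have hd : (0:ℝ) ≤ dist x y := dist_nonneg
  have h1 : dist ((Ftr Om sg cj al om1 om2 R Ap t x)).1 ((Ftr Om sg cj al om1 om2 R Ap t y)).1
      ≤ 1 * dist x y := by
    rw [Ftr, Ftr, one_mul]; exact dist_B x y
  have h2 : dist ((Ftr Om sg cj al om1 om2 R Ap t x)).2.1 ((Ftr Om sg cj al om1 om2 R Ap t y)).2.1
      ≤ (Om ^ 2 + sg + 20 * cj) * dist x y := by
    rw [Ftr, Ftr]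
    show dist (-Om ^ 2 * x.1 - sg * x.2.1 + cj * (lam x * lam x * ((starRingEnd ℂ) x.2.2.1 * x.2.2.2).im))
      (-Om ^ 2 * y.1 - sg * y.2.1 + cj * (lam y * lam y * ((starRingEnd ℂ) y.2.2.1 * y.2.2.2).im)) ≤ _
    rw [Real.dist_eq]
    set Ix := ((starRingEnd ℂ) x.2.2.1 * x.2.2.2).im
    set Iy := ((starRingEnd ℂ) y.2.2.1 * y.2.2.2).im
    have e : -Om ^ 2 * x.1 - sg * x.2.1 + cj * (lam x * lam x * Ix)
        - (-Om ^ 2 * y.1 - sg * y.2.1 + cj * (lam y * lam y * Iy))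
        = -Om ^ 2 * (x.1 - y.1) - sg * (x.2.1 - y.2.1)
          + cj * (lam x * lam x * Ix - lam y * lam y * Iy) := by ring
    rw [e]
    have hA : |x.1 - y.1| ≤ dist x y := by rw [← Real.dist_eq]; exact dist_A x y
    have hB : |x.2.1 - y.2.1| ≤ dist x y := by rw [← Real.dist_eq]; exact dist_B x y
    calc |(-Om ^ 2 * (x.1 - y.1) - sg * (x.2.1 - y.2.1))
          + cj * (lam x * lam x * Ix - lam y * lam y * Iy)|
        ≤ |(-Om ^ 2 * (x.1 - y.1) - sg * (x.2.1 - y.2.1))|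
          + |cj * (lam x * lam x * Ix - lam y * lam y * Iy)| := abs_add_le _ _
      _ ≤ (|(-Om ^ 2 * (x.1 - y.1))| + |sg * (x.2.1 - y.2.1)|)
          + |cj * (lam x * lam x * Ix - lam y * lam y * Iy)| := by
          gcongr; exact abs_sub _ _
      _ ≤ (Om ^ 2 * dist x y + sg * dist x y) + cj * (20 * dist x y) := by
          refine add_le_add (add_le_add ?_ ?_) ?_
          · rw [abs_mul, abs_neg, _root_.abs_of_nonneg (by positivity : (0:ℝ) ≤ Om ^ 2)]
            exact mul_le_mul_of_nonneg_left hA (by positivity)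
          · rw [abs_mul, _root_.abs_of_nonneg hsg]
            exact mul_le_mul_of_nonneg_left hB hsg
          · rw [abs_mul, _root_.abs_of_nonneg hcj]
            exact mul_le_mul_of_nonneg_left (lamsq_im_diff x y) hcj
      _ = (Om ^ 2 + sg + 20 * cj) * dist x y := by ring
  have h3 : dist ((Ftr Om sg cj al om1 om2 R Ap t x)).2.2.1
      ((Ftr Om sg cj al om1 om2 R Ap t y)).2.2.1
      ≤ (|om1| + (al * (R + M) * 10 + al)) * dist x y := by
    rw [Ftr, Ftr]
    show dist (-(om1 : ℂ) * Complex.I * x.2.2.1 + ((al * (trunc R x.1 + Ap t) * lam x : ℝ) : ℂ) * x.2.2.2)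
      (-(om1 : ℂ) * Complex.I * y.2.2.1 + ((al * (trunc R y.1 + Ap t) * lam y : ℝ) : ℂ) * y.2.2.2) ≤ _
    rw [dist_eq_norm]
    have e : -(om1 : ℂ) * Complex.I * x.2.2.1 + ((al * (trunc R x.1 + Ap t) * lam x : ℝ) : ℂ) * x.2.2.2
        - (-(om1 : ℂ) * Complex.I * y.2.2.1 + ((al * (trunc R y.1 + Ap t) * lam y : ℝ) : ℂ) * y.2.2.2)
        = -(om1 : ℂ) * Complex.I * (x.2.2.1 - y.2.2.1)
          + (((al * (trunc R x.1 + Ap t) * lam x : ℝ) : ℂ) * x.2.2.2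
            - ((al * (trunc R y.1 + Ap t) * lam y : ℝ) : ℂ) * y.2.2.2) := by ring
    rw [e]
    calc ‖-(om1 : ℂ) * Complex.I * (x.2.2.1 - y.2.2.1)
          + (((al * (trunc R x.1 + Ap t) * lam x : ℝ) : ℂ) * x.2.2.2
            - ((al * (trunc R y.1 + Ap t) * lam y : ℝ) : ℂ) * y.2.2.2)‖
        ≤ ‖-(om1 : ℂ) * Complex.I * (x.2.2.1 - y.2.2.1)‖
          + ‖((al * (trunc R x.1 + Ap t) * lam x : ℝ) : ℂ) * x.2.2.2
            - ((al * (trunc R y.1 + Ap t) * lam y : ℝ) : ℂ) * y.2.2.2‖ := norm_add_le _ _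
      _ ≤ |om1| * dist x y + (al * (R + M) * 10 + al) * dist x y := by
          refine add_le_add ?_ (coupling_diff₂ al R M (Ap t) hal hR hApt x y)
          rw [norm_mul, norm_mul, norm_neg, Complex.norm_real, Real.norm_eq_abs,
            Complex.norm_I, mul_one]
          exact mul_le_mul_of_nonneg_left (by rw [← dist_eq_norm]; exact dist_c1 x y)
            (abs_nonneg _)
      _ = (|om1| + (al * (R + M) * 10 + al)) * dist x y := by ring
  have h4 : dist ((Ftr Om sg cj al om1 om2 R Ap t x)).2.2.2
      ((Ftr Om sg cj al om1 om2 R Ap t y)).2.2.2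
      ≤ (|om2| + (al * (R + M) * 10 + al)) * dist x y := by
    rw [Ftr, Ftr]
    show dist (-(om2 : ℂ) * Complex.I * x.2.2.2 - ((al * (trunc R x.1 + Ap t) * lam x : ℝ) : ℂ) * x.2.2.1)
      (-(om2 : ℂ) * Complex.I * y.2.2.2 - ((al * (trunc R y.1 + Ap t) * lam y : ℝ) : ℂ) * y.2.2.1) ≤ _
    rw [dist_eq_norm]
    have e : -(om2 : ℂ) * Complex.I * x.2.2.2 - ((al * (trunc R x.1 + Ap t) * lam x : ℝ) : ℂ) * x.2.2.1
        - (-(om2 : ℂ) * Complex.I * y.2.2.2 - ((al * (trunc R y.1 + Ap t) * lam y : ℝ) : ℂ) * y.2.2.1)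
        = -(om2 : ℂ) * Complex.I * (x.2.2.2 - y.2.2.2)
          - (((al * (trunc R x.1 + Ap t) * lam x : ℝ) : ℂ) * x.2.2.1
            - ((al * (trunc R y.1 + Ap t) * lam y : ℝ) : ℂ) * y.2.2.1) := by ring
    rw [e]
    calc ‖-(om2 : ℂ) * Complex.I * (x.2.2.2 - y.2.2.2)
          - (((al * (trunc R x.1 + Ap t) * lam x : ℝ) : ℂ) * x.2.2.1
            - ((al * (trunc R y.1 + Ap t) * lam y : ℝ) : ℂ) * y.2.2.1)‖
        ≤ ‖-(om2 : ℂ) * Complex.I * (x.2.2.2 - y.2.2.2)‖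
          + ‖((al * (trunc R x.1 + Ap t) * lam x : ℝ) : ℂ) * x.2.2.1
            - ((al * (trunc R y.1 + Ap t) * lam y : ℝ) : ℂ) * y.2.2.1‖ := norm_sub_le _ _
      _ ≤ |om2| * dist x y + (al * (R + M) * 10 + al) * dist x y := by
          refine add_le_add ?_ (coupling_diff₁ al R M (Ap t) hal hR hApt x y)
          rw [norm_mul, norm_mul, norm_neg, Complex.norm_real, Real.norm_eq_abs,
            Complex.norm_I, mul_one]
          exact mul_le_mul_of_nonneg_left (by rw [← dist_eq_norm]; exact dist_c2 x y)
            (abs_nonneg _)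
      _ = (|om2| + (al * (R + M) * 10 + al)) * dist x y := by ring
  have hfin : lipC Om sg cj al om1 om2 R M * dist x y
      = (Om ^ 2 + sg + 1 + 20 * cj + |om1| + |om2| + al * (R + M) * 10 + al) * dist x y := by
    rw [lipC]
  rw [Prod.dist_eq, Prod.dist_eq, Prod.dist_eq, hfin]
  have habs1 : (0:ℝ) ≤ |om1| := abs_nonneg _
  have habs2 : (0:ℝ) ≤ |om2| := abs_nonneg _
  have hOm : (0:ℝ) ≤ Om ^ 2 := by positivity
  have halRM : (0:ℝ) ≤ al * (R + M) * 10 := by positivity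
  refine max_le ?_ (max_le ?_ (max_le ?_ ?_))
  · exact h1.trans (by nlinarith)
  · exact h2.trans (by nlinarith)
  · exact h3.trans (by nlinarith)
  · exact h4.trans (by nlinarith)

/-- linear-growth constants (truncation independent) -/
noncomputable def KK (Om sg al om1 om2 : ℝ) : ℝ := Om ^ 2 + sg + |om1| + |om2| + al + 1
noncomputable def EPS (cj al M : ℝ) : ℝ := cj + al * M

lemma KK_pos {Om sg al om1 om2 : ℝ} (hsg : 0 ≤ sg) (hal : 0 ≤ al) :
    0 < KK Om sg al om1 om2 := by
  rw [KK]; positivity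

lemma EPS_nonneg {cj al M : ℝ} (hcj : 0 ≤ cj) (hal : 0 ≤ al) (hM : 0 ≤ M) :
    0 ≤ EPS cj al M := by rw [EPS]; positivity

lemma Ftr_norm_le (Om sg cj al om1 om2 R M : ℝ) (hsg : 0 ≤ sg) (hcj : 0 ≤ cj)
    (hal : 0 ≤ al) (hR : 0 ≤ R) (hM : 0 ≤ M) (Ap : ℝ → ℝ) (t : ℝ) (hApt : |Ap t| ≤ M)
    (x : MBE) :
    ‖Ftr Om sg cj al om1 om2 R Ap t x‖ ≤ KK Om sg al om1 om2 * ‖x‖ + EPS cj al M := by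
  have hx : (0:ℝ) ≤ ‖x‖ := norm_nonneg _
  have hb1 : (0:ℝ) ≤ |om1| := abs_nonneg _
  have hb2 : (0:ℝ) ≤ |om2| := abs_nonneg _
  have hOm : (0:ℝ) ≤ Om ^ 2 := by positivity
  rw [KK, EPS, Ftr]
  rw [Prod.norm_def, Prod.norm_def, Prod.norm_def]
  refine max_le ?_ (max_le ?_ (max_le ?_ ?_))
  · have := norm_B_le x
    rw [Real.norm_eq_abs]
    nlinarith
  · rw [Real.norm_eq_abs]
    have hIm := lamsq_im_le x
    have hA := norm_A_le x
    have hB := norm_B_le x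
    calc |(-Om ^ 2 * x.1 - sg * x.2.1 + cj * (lam x * lam x * ((starRingEnd ℂ) x.2.2.1 * x.2.2.2).im))|
        ≤ |(-Om ^ 2 * x.1)| + |sg * x.2.1| + |cj * (lam x * lam x * ((starRingEnd ℂ) x.2.2.1 * x.2.2.2).im)| := by
          refine (abs_add_le _ _).trans ?_
          gcongr
          exact abs_sub _ _
      _ ≤ Om ^ 2 * ‖x‖ + sg * ‖x‖ + cj * 1 := by
          refine add_le_add (add_le_add ?_ ?_) ?_
          · rw [abs_mul, abs_neg, _root_.abs_of_nonneg hOm]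
            exact mul_le_mul_of_nonneg_left hA hOm
          · rw [abs_mul, _root_.abs_of_nonneg hsg]
            exact mul_le_mul_of_nonneg_left hB hsg
          · rw [abs_mul, _root_.abs_of_nonneg hcj]
            exact mul_le_mul_of_nonneg_left hIm hcj
      _ ≤ (Om ^ 2 + sg + |om1| + |om2| + al + 1) * ‖x‖ + (cj + al * M) := by nlinarith
  · have hcoef : |al * (trunc R x.1 + Ap t)| ≤ al * (|x.1| + M) := by
      rw [abs_mul, _root_.abs_of_nonneg hal]
      refine mul_le_mul_of_nonneg_left ?_ hal
      exact (abs_add_le _ _).trans (add_le_add (trunc_abs_le' R x.1 hR) hApt)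
    have e : ((al * (trunc R x.1 + Ap t) * lam x : ℝ) : ℂ) * x.2.2.2
        = ((al * (trunc R x.1 + Ap t) : ℝ) : ℂ) * Psi2 x := by
      rw [Psi2]; push_cast; ring
    calc ‖-(om1 : ℂ) * Complex.I * x.2.2.1 + ((al * (trunc R x.1 + Ap t) * lam x : ℝ) : ℂ) * x.2.2.2‖
        ≤ ‖-(om1 : ℂ) * Complex.I * x.2.2.1‖ + ‖((al * (trunc R x.1 + Ap t) * lam x : ℝ) : ℂ) * x.2.2.2‖ :=
          norm_add_le _ _
      _ ≤ |om1| * ‖x‖ + al * (|x.1| + M) * 1 := by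
          refine add_le_add ?_ ?_
          · rw [norm_mul, norm_mul, norm_neg, Complex.norm_real, Real.norm_eq_abs,
              Complex.norm_I, mul_one]
            exact mul_le_mul_of_nonneg_left (norm_c1_le x) (abs_nonneg _)
          · rw [e, norm_mul, Complex.norm_real, Real.norm_eq_abs]
            exact mul_le_mul hcoef (psi2_norm x) (norm_nonneg _)
              (mul_nonneg hal (add_nonneg (abs_nonneg _) hM))
      _ ≤ (Om ^ 2 + sg + |om1| + |om2| + al + 1) * ‖x‖ + (cj + al * M) := by
          have := norm_A_le x
          nlinarith
  · have hcoef : |al * (trunc R x.1 + Ap t)| ≤ al * (|x.1| + M) := by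
      rw [abs_mul, _root_.abs_of_nonneg hal]
      refine mul_le_mul_of_nonneg_left ?_ hal
      exact (abs_add_le _ _).trans (add_le_add (trunc_abs_le' R x.1 hR) hApt)
    have e : ((al * (trunc R x.1 + Ap t) * lam x : ℝ) : ℂ) * x.2.2.1
        = ((al * (trunc R x.1 + Ap t) : ℝ) : ℂ) * Psi1 x := by
      rw [Psi1]; push_cast; ring
    calc ‖-(om2 : ℂ) * Complex.I * x.2.2.2 - ((al * (trunc R x.1 + Ap t) * lam x : ℝ) : ℂ) * x.2.2.1‖
        ≤ ‖-(om2 : ℂ) * Complex.I * x.2.2.2‖ + ‖((al * (trunc R x.1 + Ap t) * lam x : ℝ) : ℂ) * x.2.2.1‖ :=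
          norm_sub_le _ _
      _ ≤ |om2| * ‖x‖ + al * (|x.1| + M) * 1 := by
          refine add_le_add ?_ ?_
          · rw [norm_mul, norm_mul, norm_neg, Complex.norm_real, Real.norm_eq_abs,
              Complex.norm_I, mul_one]
            exact mul_le_mul_of_nonneg_left (norm_c2_le x) (abs_nonneg _)
          · rw [e, norm_mul, Complex.norm_real, Real.norm_eq_abs]
            exact mul_le_mul hcoef (psi1_norm x) (norm_nonneg _)
              (mul_nonneg hal (add_nonneg (abs_nonneg _) hM))
      _ ≤ (Om ^ 2 + sg + |om1| + |om2| + al + 1) * ‖x‖ + (cj + al * M) := by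
          have := norm_A_le x
          nlinarith

lemma charge_norm_le {x : MBE} (h : nsq x = 1) : ‖x.2.2.1‖ ≤ 1 ∧ ‖x.2.2.2‖ ≤ 1 := by
  rw [nsq] at h
  constructor <;> nlinarith [norm_nonneg x.2.2.1, norm_nonneg x.2.2.2, sq_nonneg ‖x.2.2.1‖,
    sq_nonneg ‖x.2.2.2‖]

lemma Ftrue_norm_le (Om sg cj al om1 om2 M : ℝ) (hsg : 0 ≤ sg) (hcj : 0 ≤ cj)
    (hal : 0 ≤ al) (hM : 0 ≤ M) (Ap : ℝ → ℝ) (t : ℝ) (hApt : |Ap t| ≤ M)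
    (x : MBE) (hx1 : nsq x = 1) :
    ‖Ftrue Om sg cj al om1 om2 Ap t x‖ ≤ KK Om sg al om1 om2 * ‖x‖ + EPS cj al M := by
  obtain ⟨hc1, hc2⟩ := charge_norm_le hx1
  have hx : (0:ℝ) ≤ ‖x‖ := norm_nonneg _
  have hb1 : (0:ℝ) ≤ |om1| := abs_nonneg _
  have hb2 : (0:ℝ) ≤ |om2| := abs_nonneg _
  have hOm : (0:ℝ) ≤ Om ^ 2 := by positivity
  have hA := norm_A_le x
  have hB := norm_B_le x
  have hcoef : |al * (x.1 + Ap t)| ≤ al * (|x.1| + M) := by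
    rw [abs_mul, _root_.abs_of_nonneg hal]
    exact mul_le_mul_of_nonneg_left ((abs_add_le _ _).trans (add_le_add le_rfl hApt)) hal
  rw [KK, EPS, Ftrue]
  rw [Prod.norm_def, Prod.norm_def, Prod.norm_def]
  refine max_le ?_ (max_le ?_ (max_le ?_ ?_))
  · rw [Real.norm_eq_abs]; nlinarith
  · rw [Real.norm_eq_abs]
    have hIm : |((starRingEnd ℂ) x.2.2.1 * x.2.2.2).im| ≤ 1 := by
      refine (im_mul_le _ _).trans ?_
      exact mul_le_one₀ hc1 (norm_nonneg _) hc2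
    calc |(-Om ^ 2 * x.1 - sg * x.2.1 + cj * ((starRingEnd ℂ) x.2.2.1 * x.2.2.2).im)|
        ≤ |(-Om ^ 2 * x.1)| + |sg * x.2.1| + |cj * ((starRingEnd ℂ) x.2.2.1 * x.2.2.2).im| := by
          refine (abs_add_le _ _).trans ?_
          gcongr
          exact abs_sub _ _
      _ ≤ Om ^ 2 * ‖x‖ + sg * ‖x‖ + cj * 1 := by
          refine add_le_add (add_le_add ?_ ?_) ?_
          · rw [abs_mul, abs_neg, _root_.abs_of_nonneg hOm]
            exact mul_le_mul_of_nonneg_left hA hOm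
          · rw [abs_mul, _root_.abs_of_nonneg hsg]
            exact mul_le_mul_of_nonneg_left hB hsg
          · rw [abs_mul, _root_.abs_of_nonneg hcj]
            exact mul_le_mul_of_nonneg_left hIm hcj
      _ ≤ (Om ^ 2 + sg + |om1| + |om2| + al + 1) * ‖x‖ + (cj + al * M) := by nlinarith
  · calc ‖-(om1 : ℂ) * Complex.I * x.2.2.1 + ((al * (x.1 + Ap t) : ℝ) : ℂ) * x.2.2.2‖
        ≤ ‖-(om1 : ℂ) * Complex.I * x.2.2.1‖ + ‖((al * (x.1 + Ap t) : ℝ) : ℂ) * x.2.2.2‖ :=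
          norm_add_le _ _
      _ ≤ |om1| * ‖x‖ + al * (|x.1| + M) * 1 := by
          refine add_le_add ?_ ?_
          · rw [norm_mul, norm_mul, norm_neg, Complex.norm_real, Real.norm_eq_abs,
              Complex.norm_I, mul_one]
            exact mul_le_mul_of_nonneg_left (norm_c1_le x) (abs_nonneg _)
          · rw [norm_mul, Complex.norm_real, Real.norm_eq_abs]
            exact mul_le_mul hcoef hc2 (norm_nonneg _)
              (mul_nonneg hal (add_nonneg (abs_nonneg _) hM))
      _ ≤ (Om ^ 2 + sg + |om1| + |om2| + al + 1) * ‖x‖ + (cj + al * M) := by nlinarith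
  · calc ‖-(om2 : ℂ) * Complex.I * x.2.2.2 - ((al * (x.1 + Ap t) : ℝ) : ℂ) * x.2.2.1‖
        ≤ ‖-(om2 : ℂ) * Complex.I * x.2.2.2‖ + ‖((al * (x.1 + Ap t) : ℝ) : ℂ) * x.2.2.1‖ :=
          norm_sub_le _ _
      _ ≤ |om2| * ‖x‖ + al * (|x.1| + M) * 1 := by
          refine add_le_add ?_ ?_
          · rw [norm_mul, norm_mul, norm_neg, Complex.norm_real, Real.norm_eq_abs,
              Complex.norm_I, mul_one]
            exact mul_le_mul_of_nonneg_left (norm_c2_le x) (abs_nonneg _)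
          · rw [norm_mul, Complex.norm_real, Real.norm_eq_abs]
            exact mul_le_mul hcoef hc1 (norm_nonneg _)
              (mul_nonneg hal (add_nonneg (abs_nonneg _) hM))
      _ ≤ (Om ^ 2 + sg + |om1| + |om2| + al + 1) * ‖x‖ + (cj + al * M) := by nlinarith


/-! ### generic global existence for globally Lipschitz fields -/

open scoped NNReal

section ODE

variable {F : Type*} [NormedAddCommGroup F] [NormedSpace ℝ F] [CompleteSpace F]

lemma hasDerivWithinAt_of_nmem_closure' {f : ℝ → F} {d : F} {s : Set ℝ} {x : ℝ}
    (h : x ∉ closure s) : HasDerivWithinAt f d s x := by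
  have := (HasFDerivWithinAt.of_notMem_closure
    (f := f) (f' := ContinuousLinearMap.smulRight (1 : ℝ →L[ℝ] ℝ) d) h).hasDerivWithinAt
  simpa using this

/-- glue two solutions meeting at `c` -/
lemma glue_solutions (v : ℝ → F → F) (a c b : ℝ) (hac : a ≤ c) (hcb : c ≤ b)
    (f g : ℝ → F) (hfg : f c = g c)
    (hf : ∀ t ∈ Icc a c, HasDerivWithinAt f (v t (f t)) (Icc a c) t)
    (hg : ∀ t ∈ Icc c b, HasDerivWithinAt g (v t (g t)) (Icc c b) t) :
    ∃ G : ℝ → F, (∀ t, t ≤ c → G t = f t) ∧ (∀ t, c ≤ t → G t = g t) ∧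
      ∀ t ∈ Icc a b, HasDerivWithinAt G (v t (G t)) (Icc a b) t := by
  classical
  refine ⟨fun t => if t ≤ c then f t else g t, fun t ht => if_pos ht, ?_, ?_⟩
  · intro t ht
    by_cases h : t ≤ c
    · have : t = c := le_antisymm h ht
      simp [this, if_pos le_rfl, hfg]
    · simp [if_neg h]
  · intro t ht
    set G : ℝ → F := fun t => if t ≤ c then f t else g t with hG
    have hE1 : ∀ s ∈ Icc a c, G s = f s := fun s hs => if_pos hs.2
    have hE2 : ∀ s ∈ Icc c b, G s = g s := by
      intro s hs
      by_cases h : s ≤ c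
      · have : s = c := le_antisymm h hs.1
        simp only [hG, this, if_pos le_rfl, hfg]
      · simp only [hG, if_neg h]
    have hIcc : Icc a b = Icc a c ∪ Icc c b := (Icc_union_Icc_eq_Icc hac hcb).symm
    rw [hIcc]
    by_cases h : t ≤ c
    · have htac : t ∈ Icc a c := ⟨ht.1, h⟩
      have hGt : G t = f t := hE1 t htac
      refine HasDerivWithinAt.union ?_ ?_
      · rw [hGt]
        exact ((hf t htac).congr hE1 hGt)
      · rcases lt_or_eq_of_le h with hlt | heq
        · apply hasDerivWithinAt_of_nmem_closure'
          rw [closure_Icc]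
          intro hmem
          exact absurd hmem.1 (not_le.2 hlt)
        · subst heq
          have hGc : G t = g t := hE2 t ⟨le_rfl, hcb⟩
          rw [hGc]
          exact (hg t ⟨le_rfl, hcb⟩).congr hE2 hGc
    · push_neg at h
      have htcb : t ∈ Icc c b := ⟨h.le, ht.2⟩
      have hGt : G t = g t := hE2 t htcb
      refine HasDerivWithinAt.union ?_ ?_
      · apply hasDerivWithinAt_of_nmem_closure'
        rw [closure_Icc]
        intro hmem
        exact absurd hmem.2 (not_le.2 h)
      · rw [hGt]
        exact (hg t htcb).congr hE2 hGt

/-- one Picard–Lindelöf step of uniform length for a globally Lipschitz field -/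
lemma pl_step (v : ℝ → F → F) (K : ℝ≥0)
    (hlip : ∀ t, LipschitzWith K (v t))
    (hcont : ∀ x, Continuous fun t => v t x)
    (hv0 : ∀ t, v t 0 = 0)
    (s T : ℝ) (hsT : s ≤ T) (hstep : T - s ≤ (2 * (K : ℝ) + 2)⁻¹) (x₁ : F) :
    ∃ g : ℝ → F, g s = x₁ ∧ ∀ t ∈ Icc s T, HasDerivWithinAt g (v t (g t)) (Icc s T) t := by
  have hK : (0:ℝ) ≤ K := K.coe_nonneg
  let a : ℝ≥0 := ⟨‖x₁‖ + 1, by positivity⟩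
  let L : ℝ≥0 := ⟨(K : ℝ) * (2 * ‖x₁‖ + 1), by positivity⟩
  have hpl : IsPicardLindelof v (tmin := s) (tmax := T) ⟨s, ⟨le_rfl, hsT⟩⟩ x₁ a 0 L K := by
    constructor
    · exact fun t _ => LipschitzWith.lipschitzOnWith (hlip t)
    · exact fun x _ => (hcont x).continuousOn
    · intro t _ x hx
      have h1 : ‖v t x‖ ≤ (K : ℝ) * ‖x‖ := by
        have := (hlip t).dist_le_mul x 0
        rwa [hv0 t, dist_zero_right, dist_zero_right] at this
      have hxx : ‖x - x₁‖ ≤ ‖x₁‖ + 1 := mem_closedBall_iff_norm.1 hx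
      have h3 : ‖x‖ ≤ ‖x₁‖ + ‖x - x₁‖ := norm_le_norm_add_norm_sub' x x₁
      show ‖v t x‖ ≤ (K : ℝ) * (2 * ‖x₁‖ + 1)
      calc ‖v t x‖ ≤ (K : ℝ) * ‖x‖ := h1
        _ ≤ (K : ℝ) * (2 * ‖x₁‖ + 1) := by
            refine mul_le_mul_of_nonneg_left ?_ hK
            linarith
    · show (K : ℝ) * (2 * ‖x₁‖ + 1) * max (T - s) (s - s) ≤ ‖x₁‖ + 1 - ((0 : ℝ≥0) : ℝ)
      rw [NNReal.coe_zero, sub_zero]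
      have hmax : max (T - s) (s - s) = T - s := by
        rw [max_eq_left]; linarith
      rw [hmax]
      have hTs : (0:ℝ) ≤ T - s := by linarith
      have hx1 : (0:ℝ) ≤ ‖x₁‖ := norm_nonneg _
      calc (K : ℝ) * (2 * ‖x₁‖ + 1) * (T - s)
          ≤ (K : ℝ) * (2 * ‖x₁‖ + 1) * (2 * (K : ℝ) + 2)⁻¹ :=
            mul_le_mul_of_nonneg_left hstep (by positivity)
        _ ≤ ‖x₁‖ + 1 := by
            rw [mul_inv_le_iff₀ (by positivity : (0:ℝ) < 2 * (K : ℝ) + 2)]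
            nlinarith [mul_nonneg hK hx1]
  exact hpl.exists_eq_forall_mem_Icc_hasDerivWithinAt₀

/-- forward existence on `[t₀, b]` -/
lemma forward_exists (v : ℝ → F → F) (K : ℝ≥0)
    (hlip : ∀ t, LipschitzWith K (v t))
    (hcont : ∀ x, Continuous fun t => v t x)
    (hv0 : ∀ t, v t 0 = 0)
    (t₀ b : ℝ) (htb : t₀ ≤ b) (x₀ : F) :
    ∃ f : ℝ → F, f t₀ = x₀ ∧ ∀ t ∈ Icc t₀ b, HasDerivWithinAt f (v t (f t)) (Icc t₀ b) t := by
  set h : ℝ := (2 * (K : ℝ) + 2)⁻¹ with hh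
  have hhpos : (0:ℝ) < h := by rw [hh]; positivity
  have key : ∀ n : ℕ, ∃ f : ℝ → F, f t₀ = x₀ ∧
      ∀ t ∈ Icc t₀ (min b (t₀ + n * h)),
        HasDerivWithinAt f (v t (f t)) (Icc t₀ (min b (t₀ + n * h))) t := by
    intro n
    induction n with
    | zero =>
      simp only [Nat.cast_zero, zero_mul, add_zero, min_eq_right htb]
      obtain ⟨g, hg0, hg⟩ := pl_step v K hlip hcont hv0 t₀ t₀ le_rfl
        (by rw [sub_self]; positivity) x₀
      exact ⟨g, hg0, hg⟩
    | succ n ih =>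
      obtain ⟨f, hf0, hf⟩ := ih
      set c := min b (t₀ + n * h) with hc
      set c' := min b (t₀ + (n + 1 : ℕ) * h) with hc'
      have htc : t₀ ≤ c :=
        le_min htb (le_add_of_nonneg_right (mul_nonneg (Nat.cast_nonneg n) hhpos.le))
      have hcc' : c ≤ c' := by
        refine min_le_min le_rfl ?_
        have : (n : ℝ) ≤ ((n + 1 : ℕ) : ℝ) := by push_cast; linarith
        nlinarith [hhpos.le]
      by_cases hcb : b ≤ t₀ + n * h
      · have hceq : c = c' := by
          rw [hc, hc', min_eq_left hcb, min_eq_left]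
          push_cast
          nlinarith [hhpos.le]
        exact ⟨f, hf0, by rw [← hceq]; exact hf⟩
      · push_neg at hcb
        have hceq : c = t₀ + n * h := min_eq_right hcb.le
        have hstep : c' - c ≤ h := by
          have h1 : c' ≤ t₀ + (n + 1 : ℕ) * h := min_le_right _ _
          push_cast at h1
          rw [hceq]
          push_cast
          linarith
        obtain ⟨g, hgc, hg⟩ := pl_step v K hlip hcont hv0 c c' hcc' hstep (f c)
        obtain ⟨G, hG1, _, hG⟩ := glue_solutions v t₀ c c' htc hcc' f g hgc.symm hf hg
        exact ⟨G, by rw [hG1 t₀ htc, hf0], hG⟩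
  obtain ⟨n, hn⟩ := exists_nat_ge ((b - t₀) / h)
  have hbn : b ≤ t₀ + n * h := by
    rw [div_le_iff₀ hhpos] at hn
    linarith
  obtain ⟨f, hf0, hf⟩ := key n
  rw [min_eq_left hbn] at hf
  exact ⟨f, hf0, hf⟩

/-- existence on `[a, b]` with initial time `t₀` inside -/
lemma exists_solution_Icc (v : ℝ → F → F) (K : ℝ≥0)
    (hlip : ∀ t, LipschitzWith K (v t))
    (hcont : ∀ x, Continuous fun t => v t x)
    (hv0 : ∀ t, v t 0 = 0)
    (a t₀ b : ℝ) (hat : a ≤ t₀) (htb : t₀ ≤ b) (x₀ : F) :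
    ∃ f : ℝ → F, f t₀ = x₀ ∧ ∀ t ∈ Icc a b, HasDerivWithinAt f (v t (f t)) (Icc a b) t := by
  set w : ℝ → F → F := fun s x => -v (2 * t₀ - s) x with hw
  have hwlip : ∀ s, LipschitzWith K (w s) := by
    intro s
    apply LipschitzWith.of_dist_le_mul
    intro x y
    have hle := (hlip (2 * t₀ - s)).dist_le_mul x y
    rw [dist_eq_norm, dist_eq_norm] at hle
    rw [dist_eq_norm]
    calc ‖w s x - w s y‖ = ‖v (2 * t₀ - s) x - v (2 * t₀ - s) y‖ := by
          rw [hw]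
          rw [show -v (2 * t₀ - s) x - -v (2 * t₀ - s) y
            = -(v (2 * t₀ - s) x - v (2 * t₀ - s) y) by abel, norm_neg]
      _ ≤ (K : ℝ) * dist x y := by rw [dist_eq_norm]; exact hle
  have hwcont : ∀ x, Continuous fun s => w s x := by
    intro x
    exact ((hcont x).comp (by continuity)).neg
  have hw0 : ∀ s, w s 0 = 0 := fun s => by rw [hw]; simp [hv0]
  obtain ⟨y, hy0, hy⟩ := forward_exists w K hwlip hwcont hw0 t₀ (2 * t₀ - a)
    (by linarith) x₀
  set fb : ℝ → F := fun t => y (2 * t₀ - t) with hfb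
  have hfb0 : fb t₀ = x₀ := by
    show y (2 * t₀ - t₀) = x₀
    rw [show 2 * t₀ - t₀ = t₀ by ring, hy0]
  have hfbd : ∀ t ∈ Icc a t₀, HasDerivWithinAt fb (v t (fb t)) (Icc a t₀) t := by
    intro t ht
    have hmem : 2 * t₀ - t ∈ Icc t₀ (2 * t₀ - a) := ⟨by linarith [ht.2], by linarith [ht.1]⟩
    have hyd := hy (2 * t₀ - t) hmem
    rw [hw] at hyd
    simp only [] at hyd
    rw [show (2:ℝ) * t₀ - (2 * t₀ - t) = t by ring] at hyd
    have hφ : HasDerivWithinAt (fun s : ℝ => 2 * t₀ - s) (-1) (Icc a t₀) t :=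
      ((hasDerivAt_id t).const_sub (2 * t₀)).hasDerivWithinAt
    have hmaps : MapsTo (fun s : ℝ => 2 * t₀ - s) (Icc a t₀) (Icc t₀ (2 * t₀ - a)) := by
      intro s hs
      constructor
      · show t₀ ≤ 2 * t₀ - s
        linarith [hs.2]
      · show 2 * t₀ - s ≤ 2 * t₀ - a
        linarith [hs.1]
    have hcomp := HasDerivWithinAt.scomp t hyd hφ hmaps
    simp only [smul_neg, neg_smul, one_smul, neg_neg] at hcomp
    exact hcomp
  obtain ⟨f, hf0, hf⟩ := forward_exists v K hlip hcont hv0 t₀ b htb x₀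
  obtain ⟨G, hG1, hG2, hG⟩ := glue_solutions v a t₀ b hat htb fb f
    (by rw [hfb0, hf0]) hfbd hf
  exact ⟨G, by rw [hG2 t₀ le_rfl, hf0], hG⟩

end ODE

/-! ### conservation of charge -/

lemma norm_sq_complex (z : ℂ) : ‖z‖ ^ 2 = z.re * z.re + z.im * z.im := by
  rw [Complex.sq_norm, Complex.normSq_apply]

lemma conserved (C₁ C₂ : ℝ → ℂ) (om1 om2 a b : ℝ)
    (hcont : ContinuousOn (fun t => ‖C₁ t‖ ^ 2 + ‖C₂ t‖ ^ 2) (Icc a b))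
    (hder : ∀ t ∈ Ico a b, ∃ ρ : ℝ,
      HasDerivWithinAt C₁ (-(om1 : ℂ) * Complex.I * C₁ t + ((ρ : ℝ) : ℂ) * C₂ t) (Ici t) t ∧
      HasDerivWithinAt C₂ (-(om2 : ℂ) * Complex.I * C₂ t - ((ρ : ℝ) : ℂ) * C₁ t) (Ici t) t) :
    ∀ t ∈ Icc a b, ‖C₁ t‖ ^ 2 + ‖C₂ t‖ ^ 2 = ‖C₁ a‖ ^ 2 + ‖C₂ a‖ ^ 2 := by
  apply constant_of_has_deriv_right_zero hcont
  intro t ht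
  obtain ⟨ρ, h1, h2⟩ := hder t ht
  set d₁ := -(om1 : ℂ) * Complex.I * C₁ t + ((ρ : ℝ) : ℂ) * C₂ t with hd₁
  set d₂ := -(om2 : ℂ) * Complex.I * C₂ t - ((ρ : ℝ) : ℂ) * C₁ t with hd₂
  have hre1 : HasDerivWithinAt (fun s => (C₁ s).re) d₁.re (Ici t) t :=
    (Complex.reCLM.hasFDerivAt.comp_hasDerivWithinAt t h1)
  have him1 : HasDerivWithinAt (fun s => (C₁ s).im) d₁.im (Ici t) t :=
    (Complex.imCLM.hasFDerivAt.comp_hasDerivWithinAt t h1)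
  have hre2 : HasDerivWithinAt (fun s => (C₂ s).re) d₂.re (Ici t) t :=
    (Complex.reCLM.hasFDerivAt.comp_hasDerivWithinAt t h2)
  have him2 : HasDerivWithinAt (fun s => (C₂ s).im) d₂.im (Ici t) t :=
    (Complex.imCLM.hasFDerivAt.comp_hasDerivWithinAt t h2)
  have hN : HasDerivWithinAt
      (fun s => ((C₁ s).re * (C₁ s).re + (C₁ s).im * (C₁ s).im)
        + ((C₂ s).re * (C₂ s).re + (C₂ s).im * (C₂ s).im))
      (((d₁.re * (C₁ t).re + (C₁ t).re * d₁.re) + (d₁.im * (C₁ t).im + (C₁ t).im * d₁.im))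
        + ((d₂.re * (C₂ t).re + (C₂ t).re * d₂.re) + (d₂.im * (C₂ t).im + (C₂ t).im * d₂.im)))
      (Ici t) t :=
    ((hre1.mul hre1).add (him1.mul him1)).add ((hre2.mul hre2).add (him2.mul him2))
  have heqfun : (fun s => ‖C₁ s‖ ^ 2 + ‖C₂ s‖ ^ 2)
      = (fun s => ((C₁ s).re * (C₁ s).re + (C₁ s).im * (C₁ s).im)
        + ((C₂ s).re * (C₂ s).re + (C₂ s).im * (C₂ s).im)) := by
    funext s; rw [norm_sq_complex, norm_sq_complex]
  rw [heqfun]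
  refine hN.congr_deriv ?_
  rw [hd₁, hd₂]
  simp only [Complex.add_re, Complex.add_im, Complex.sub_re, Complex.sub_im, Complex.mul_re,
    Complex.mul_im, Complex.I_re, Complex.I_im, Complex.ofReal_re, Complex.ofReal_im,
    Complex.neg_re, Complex.neg_im]
  ring

/-! ### Gronwall a priori bound -/

lemma gronwallBound_mono (δ K eps : ℝ) (hδ : 0 ≤ δ) (hK : 0 < K) (heps : 0 ≤ eps)
    {s t : ℝ} (hst : s ≤ t) : gronwallBound δ K eps s ≤ gronwallBound δ K eps t := by
  rw [gronwallBound_of_K_ne_0 hK.ne']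
  beta_reduce
  have h1 : Real.exp (K * s) ≤ Real.exp (K * t) :=
    Real.exp_le_exp.2 (mul_le_mul_of_nonneg_left hst hK.le)
  have h2 : (0:ℝ) ≤ eps / K := by positivity
  nlinarith [mul_le_mul_of_nonneg_left h1 hδ, mul_le_mul_of_nonneg_left h1 h2]

lemma gronwallBound_nonneg (δ K eps : ℝ) (hδ : 0 ≤ δ) (hK : 0 < K) (heps : 0 ≤ eps)
    {t : ℝ} (ht : 0 ≤ t) : 0 ≤ gronwallBound δ K eps t := by
  have h := gronwallBound_mono δ K eps hδ hK heps ht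
  rw [gronwallBound_x0] at h
  linarith

lemma apriori (K' E' : ℝ) (hK : 0 < K') (hE : 0 ≤ E') (x : ℝ → MBE) (d : ℝ → MBE) (T : ℝ)
    (hc : ContinuousOn x (Icc 0 T))
    (hd : ∀ t ∈ Ico (0:ℝ) T, HasDerivWithinAt x (d t) (Ici t) t)
    (hb : ∀ t ∈ Ico (0:ℝ) T, ‖d t‖ ≤ K' * ‖x t‖ + E') :
    ∀ t ∈ Icc (0:ℝ) T, ‖x t‖ ≤ gronwallBound ‖x 0‖ K' E' T := by
  intro t ht
  have h := norm_le_gronwallBound_of_norm_deriv_right_le hc hd le_rfl hb t ht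
  rw [sub_zero] at h
  exact h.trans (gronwallBound_mono _ _ _ (norm_nonneg _) hK hE ht.2)

/-! ### converters, projections, clamped pumping -/

section conv
variable {F : Type*} [NormedAddCommGroup F] [NormedSpace ℝ F]

lemma hasDerivWithinAt_Ici_of_Icc {f : ℝ → F} {d : F} {a b t : ℝ} (ht : t ∈ Ico a b)
    (h : HasDerivWithinAt f d (Icc a b) t) : HasDerivWithinAt f d (Ici t) t :=
  (h.mono (Icc_subset_Icc_left ht.1)).mono_of_mem_nhdsWithin (Icc_mem_nhdsGE_of_mem ⟨le_rfl, ht.2⟩)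

lemma hasDerivAt_of_Icc {f : ℝ → F} {d : F} {a b t : ℝ} (ht : t ∈ Ioo a b)
    (h : HasDerivWithinAt f d (Icc a b) t) : HasDerivAt f d t :=
  h.hasDerivAt (Icc_mem_nhds ht.1 ht.2)
end conv

noncomputable def pC1 : MBE →L[ℝ] ℂ :=
  (ContinuousLinearMap.fst ℝ ℂ ℂ).comp ((ContinuousLinearMap.snd ℝ ℝ (ℂ × ℂ)).comp
    (ContinuousLinearMap.snd ℝ ℝ (ℝ × ℂ × ℂ)))

noncomputable def pC2 : MBE →L[ℝ] ℂ :=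
  (ContinuousLinearMap.snd ℝ ℂ ℂ).comp ((ContinuousLinearMap.snd ℝ ℝ (ℂ × ℂ)).comp
    (ContinuousLinearMap.snd ℝ ℝ (ℝ × ℂ × ℂ)))

lemma deriv_C1 {x : ℝ → MBE} {d : MBE} {s : Set ℝ} {t : ℝ} (h : HasDerivWithinAt x d s t) :
    HasDerivWithinAt (fun τ => (x τ).2.2.1) d.2.2.1 s t := by
  have := pC1.hasFDerivAt.comp_hasDerivWithinAt t h
  exact this

lemma deriv_C2 {x : ℝ → MBE} {d : MBE} {s : Set ℝ} {t : ℝ} (h : HasDerivWithinAt x d s t) :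
    HasDerivWithinAt (fun τ => (x τ).2.2.2) d.2.2.2 s t := by
  have := pC2.hasFDerivAt.comp_hasDerivWithinAt t h
  exact this

/-- clamped pumping -/
noncomputable def ApC (Ap : ℝ → ℝ) (T : ℝ) : ℝ → ℝ := fun t => Ap (max 0 (min T t))

lemma ApC_cont {Ap : ℝ → ℝ} (hAp : ContinuousOn Ap (Ici 0)) (T : ℝ) :
    Continuous (ApC Ap T) := by
  apply hAp.comp_continuous
    (Continuous.max continuous_const (Continuous.min continuous_const continuous_id))
  intro t
  exact mem_Ici.2 (le_max_left 0 _)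

lemma ApC_eq (Ap : ℝ → ℝ) {T t : ℝ} (h : t ∈ Icc 0 T) : ApC Ap T t = Ap t := by
  rw [ApC, min_eq_right h.2, max_eq_right h.1]

lemma ApC_bound {Ap : ℝ → ℝ} (hAp : ContinuousOn Ap (Ici 0)) {T : ℝ} (hT : 0 ≤ T) :
    ∃ M : ℝ, 0 ≤ M ∧ ∀ t : ℝ, |ApC Ap T t| ≤ M := by
  obtain ⟨C, hC⟩ := isCompact_Icc.exists_bound_of_continuousOn
    (hAp.mono (Icc_subset_Ici_self : Icc (0:ℝ) T ⊆ Ici 0))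
  refine ⟨max C 0, le_max_right _ _, fun t => ?_⟩
  have hmem : max 0 (min T t) ∈ Icc 0 T := by
    constructor
    · exact le_max_left _ _
    · exact max_le hT (min_le_left _ _)
  calc |ApC Ap T t| = ‖Ap (max 0 (min T t))‖ := by rw [ApC, Real.norm_eq_abs]
    _ ≤ C := hC _ hmem
    _ ≤ max C 0 := le_max_left _ _

/-- `Ftrue` only depends on `Ap` through `Ap t` -/
lemma Ftrue_congr_Ap (Om sg cj al om1 om2 : ℝ) {Ap₁ Ap₂ : ℝ → ℝ} {t : ℝ}
    (h : Ap₁ t = Ap₂ t) (x : MBE) :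
    Ftrue Om sg cj al om1 om2 Ap₁ t x = Ftrue Om sg cj al om1 om2 Ap₂ t x := by
  rw [Ftrue, Ftrue, h]

/-! ### uniqueness of true solutions on `[0, T]` -/

lemma charge_conserved_true (Om sg cj al om1 om2 T : ℝ) (Ap : ℝ → ℝ) (x : ℝ → MBE)
    (hxc : ContinuousOn x (Icc 0 T))
    (hx : ∀ t ∈ Ico (0:ℝ) T, HasDerivWithinAt x
      (Ftrue Om sg cj al om1 om2 Ap t (x t)) (Ici t) t)
    (hx1 : nsq (x 0) = 1) :
    ∀ t ∈ Icc (0:ℝ) T, nsq (x t) = 1 := by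
  have hcont : ContinuousOn (fun t => ‖(x t).2.2.1‖ ^ 2 + ‖(x t).2.2.2‖ ^ 2) (Icc 0 T) := by
    apply ContinuousOn.add
    · exact (((continuous_fst.comp (continuous_snd.comp continuous_snd)).comp_continuousOn
        hxc).norm).pow 2
    · exact (((continuous_snd.comp (continuous_snd.comp continuous_snd)).comp_continuousOn
        hxc).norm).pow 2
  have hder : ∀ t ∈ Ico (0:ℝ) T, ∃ ρ : ℝ,
      HasDerivWithinAt (fun τ => (x τ).2.2.1)
        (-(om1 : ℂ) * Complex.I * (x t).2.2.1 + ((ρ : ℝ) : ℂ) * (x t).2.2.2) (Ici t) t ∧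
      HasDerivWithinAt (fun τ => (x τ).2.2.2)
        (-(om2 : ℂ) * Complex.I * (x t).2.2.2 - ((ρ : ℝ) : ℂ) * (x t).2.2.1) (Ici t) t := by
    intro t ht
    exact ⟨al * ((x t).1 + Ap t), deriv_C1 (hx t ht), deriv_C2 (hx t ht)⟩
  have := conserved (fun τ => (x τ).2.2.1) (fun τ => (x τ).2.2.2) om1 om2 0 T hcont hder
  intro t ht
  have h := this t ht
  rw [nsq] at hx1 ⊢
  rw [h, hx1]

lemma unique_true (Om sg cj al om1 om2 : ℝ) (Ap : ℝ → ℝ)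
    (hsg : 0 ≤ sg) (hcj : 0 ≤ cj) (hal : 0 ≤ al)
    (hAp : ContinuousOn Ap (Ici 0)) (T : ℝ) (hT : 0 ≤ T)
    (x y : ℝ → MBE)
    (hxc : ContinuousOn x (Icc 0 T))
    (hx : ∀ t ∈ Ico (0:ℝ) T, HasDerivWithinAt x
      (Ftrue Om sg cj al om1 om2 Ap t (x t)) (Ici t) t)
    (hx1 : nsq (x 0) = 1)
    (hyc : ContinuousOn y (Icc 0 T))
    (hy : ∀ t ∈ Ico (0:ℝ) T, HasDerivWithinAt y
      (Ftrue Om sg cj al om1 om2 Ap t (y t)) (Ici t) t)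
    (hy1 : nsq (y 0) = 1)
    (hxy : x 0 = y 0) :
    EqOn x y (Icc 0 T) := by
  obtain ⟨M, hM0, hM⟩ := ApC_bound hAp hT
  have hxn := charge_conserved_true Om sg cj al om1 om2 T Ap x hxc hx hx1
  have hyn := charge_conserved_true Om sg cj al om1 om2 T Ap y hyc hy hy1
  have hKpos : 0 < KK Om sg al om1 om2 := KK_pos hsg hal
  have hEpos : 0 ≤ EPS cj al M := EPS_nonneg hcj hal hM0
  set G := gronwallBound ‖x 0‖ (KK Om sg al om1 om2) (EPS cj al M) T with hG
  have hxb : ∀ t ∈ Icc (0:ℝ) T, ‖x t‖ ≤ G := by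
    apply apriori _ _ hKpos hEpos x (fun t => Ftrue Om sg cj al om1 om2 Ap t (x t)) T hxc hx
    intro t ht
    exact Ftrue_norm_le Om sg cj al om1 om2 M hsg hcj hal hM0 Ap t
      (by rw [← ApC_eq Ap (mem_Icc_of_Ico ht)]; exact hM t) (x t)
      (hxn t (mem_Icc_of_Ico ht))
  have hyb : ∀ t ∈ Icc (0:ℝ) T, ‖y t‖ ≤ G := by
    rw [hG, hxy]
    apply apriori _ _ hKpos hEpos y (fun t => Ftrue Om sg cj al om1 om2 Ap t (y t)) T hyc hy
    intro t ht
    exact Ftrue_norm_le Om sg cj al om1 om2 M hsg hcj hal hM0 Ap t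
      (by rw [← ApC_eq Ap (mem_Icc_of_Ico ht)]; exact hM t) (y t)
      (hyn t (mem_Icc_of_Ico ht))
  have hG0 : 0 ≤ G := by
    rw [hG]
    exact le_trans (norm_nonneg _) (by
      have := gronwallBound_mono ‖x 0‖ (KK Om sg al om1 om2) (EPS cj al M)
        (norm_nonneg _) hKpos hEpos hT
      rwa [gronwallBound_x0] at this)
  -- both solve the truncated field with R = G and clamped pumping
  have hrw : ∀ (z : ℝ → MBE), (∀ t ∈ Icc (0:ℝ) T, nsq (z t) = 1) →
      (∀ t ∈ Icc (0:ℝ) T, ‖z t‖ ≤ G) →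
      ∀ t ∈ Ico (0:ℝ) T,
        Ftr Om sg cj al om1 om2 G (ApC Ap T) t (z t) = Ftrue Om sg cj al om1 om2 Ap t (z t) := by
    intro z hzn hzb t ht
    rw [Ftr_eq_Ftrue Om sg cj al om1 om2 G (ApC Ap T) t (z t)
      (hzn t (mem_Icc_of_Ico ht))
      ((norm_A_le (z t)).trans (hzb t (mem_Icc_of_Ico ht)))]
    exact Ftrue_congr_Ap Om sg cj al om1 om2 (ApC_eq Ap (mem_Icc_of_Ico ht)) (z t)
  have hlip : ∀ t : ℝ, LipschitzOnWith
      (Real.toNNReal (lipC Om sg cj al om1 om2 G M))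
      (Ftr Om sg cj al om1 om2 G (ApC Ap T) t) univ :=
    fun t => (Ftr_lipschitzWith Om sg cj al om1 om2 G M hsg hcj hal hG0 hM0
      (ApC Ap T) t (hM t)).lipschitzOnWith
  exact ODE_solution_unique_of_mem_Icc_right
    (v := Ftr Om sg cj al om1 om2 G (ApC Ap T)) (s := fun _ => univ) (fun t _ => hlip t)
    hxc (fun t ht => by rw [hrw x hxn hxb t ht]; exact hx t ht) (fun t _ => mem_univ _)
    hyc (fun t ht => by rw [hrw y hyn hyb t ht]; exact hy t ht) (fun t _ => mem_univ _)
    hxy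

/-! ### existence of the global solution -/

lemma Ftr_cont_t (Om sg cj al om1 om2 R : ℝ) (Ap : ℝ → ℝ) (hAp : Continuous Ap) (z : MBE) :
    Continuous fun t => Ftr Om sg cj al om1 om2 R Ap t z := by
  unfold Ftr
  refine Continuous.prodMk continuous_const (Continuous.prodMk continuous_const
    (Continuous.prodMk ?_ ?_))
  · exact continuous_const.add
      ((Complex.continuous_ofReal.comp
        ((continuous_const.mul (continuous_const.add hAp)).mul continuous_const)).mul continuous_const)
  · exact continuous_const.sub
      ((Complex.continuous_ofReal.comp
        ((continuous_const.mul (continuous_const.add hAp)).mul continuous_const)).mul continuous_const)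

lemma exists_sol_n (Om sg cj al om1 om2 : ℝ) (Ap : ℝ → ℝ)
    (hsg : 0 ≤ sg) (hcj : 0 ≤ cj) (hal : 0 ≤ al)
    (hAp : ContinuousOn Ap (Ici 0)) (x₀ : MBE) (hx₀ : nsq x₀ = 1) (n : ℕ) :
    ∃ x : ℝ → MBE, x 0 = x₀ ∧
      (∀ t ∈ Ico (0:ℝ) ((n:ℝ)+1), HasDerivAt x (Ftrue Om sg cj al om1 om2 Ap t (x t)) t) ∧
      ContinuousOn x (Icc 0 ((n:ℝ)+1)) ∧
      (∀ t ∈ Icc (0:ℝ) ((n:ℝ)+1), nsq (x t) = 1) := by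
  set T : ℝ := (n:ℝ) + 1 with hTdef
  have hT0 : (0:ℝ) ≤ T := by rw [hTdef]; positivity
  obtain ⟨M, hM0, hM⟩ := ApC_bound hAp hT0
  have hKpos : 0 < KK Om sg al om1 om2 := KK_pos hsg hal
  have hEpos : 0 ≤ EPS cj al M := EPS_nonneg hcj hal hM0
  set R : ℝ := gronwallBound ‖x₀‖ (KK Om sg al om1 om2) (EPS cj al M) T with hRdef
  have hR0 : (0:ℝ) ≤ R := by
    rw [hRdef]
    exact gronwallBound_nonneg _ _ _ (norm_nonneg _) hKpos hEpos hT0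
  set v : ℝ → MBE → MBE := Ftr Om sg cj al om1 om2 R (ApC Ap T) with hv
  obtain ⟨x, hx0, hx⟩ := exists_solution_Icc v
    (Real.toNNReal (lipC Om sg cj al om1 om2 R M))
    (fun t => Ftr_lipschitzWith Om sg cj al om1 om2 R M hsg hcj hal hR0 hM0 (ApC Ap T) t (hM t))
    (fun z => Ftr_cont_t Om sg cj al om1 om2 R (ApC Ap T) (ApC_cont hAp T) z)
    (fun t => Ftr_zero Om sg cj al om1 om2 R (ApC Ap T) t)
    (-1) 0 T (by linarith) hT0 x₀
  have hxc : ContinuousOn x (Icc (-1) T) := fun t ht => (hx t ht).continuousWithinAt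
  have hxr : ∀ t ∈ Ico (-1:ℝ) T, HasDerivWithinAt x (v t (x t)) (Ici t) t :=
    fun t ht => hasDerivWithinAt_Ici_of_Icc ht (hx t (mem_Icc_of_Ico ht))
  -- conservation of charge on [-1, T]
  have hcont2 : ContinuousOn (fun t => ‖(x t).2.2.1‖ ^ 2 + ‖(x t).2.2.2‖ ^ 2) (Icc (-1) T) := by
    apply ContinuousOn.add
    · exact (((continuous_fst.comp (continuous_snd.comp continuous_snd)).comp_continuousOn
        hxc).norm).pow 2
    · exact (((continuous_snd.comp (continuous_snd.comp continuous_snd)).comp_continuousOn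
        hxc).norm).pow 2
  have hcons := conserved (fun τ => (x τ).2.2.1) (fun τ => (x τ).2.2.2) om1 om2 (-1) T hcont2
    (by
      intro t ht
      exact ⟨al * (trunc R (x t).1 + ApC Ap T t) * lam (x t),
        deriv_C1 (hxr t ht), deriv_C2 (hxr t ht)⟩)
  have h0mem : (0:ℝ) ∈ Icc (-1:ℝ) T := ⟨by linarith, hT0⟩
  have hinit : ‖(x 0).2.2.1‖ ^ 2 + ‖(x 0).2.2.2‖ ^ 2 = 1 := by
    rw [hx0]; exact hx₀
  have hn1 : ∀ t ∈ Icc (-1:ℝ) T, nsq (x t) = 1 := by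
    intro t ht
    have h1 := hcons t ht
    have h2 := hcons 0 h0mem
    rw [nsq]
    rw [h1, ← h2, hinit]
  -- Gronwall bound on [0, T]
  have hxb : ∀ t ∈ Icc (0:ℝ) T, ‖x t‖ ≤ R := by
    have := apriori (KK Om sg al om1 om2) (EPS cj al M) hKpos hEpos x
      (fun t => v t (x t)) T
      (hxc.mono (Icc_subset_Icc (by linarith) le_rfl))
      (fun t ht => hxr t ⟨by linarith [ht.1], ht.2⟩)
      (fun t ht => Ftr_norm_le Om sg cj al om1 om2 R M hsg hcj hal hR0 hM0 (ApC Ap T) t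
        (hM t) (x t))
    intro t ht
    have := this t ht
    rwa [hx0, ← hRdef] at this
  refine ⟨x, hx0, ?_, hxc.mono (Icc_subset_Icc (by linarith) le_rfl), ?_⟩
  · intro t ht
    have hDA : HasDerivAt x (v t (x t)) t :=
      hasDerivAt_of_Icc ⟨by linarith [ht.1], ht.2⟩ (hx t ⟨by linarith [ht.1], ht.2.le⟩)
    have heq : v t (x t) = Ftrue Om sg cj al om1 om2 Ap t (x t) := by
      rw [hv]
      rw [Ftr_eq_Ftrue Om sg cj al om1 om2 R (ApC Ap T) t (x t)
        (hn1 t ⟨by linarith [ht.1], ht.2.le⟩)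
        ((norm_A_le (x t)).trans (hxb t (mem_Icc_of_Ico ht)))]
      exact Ftrue_congr_Ap Om sg cj al om1 om2 (ApC_eq Ap (mem_Icc_of_Ico ht)) (x t)
    rw [← heq]
    exact hDA
  · intro t ht
    exact hn1 t ⟨by linarith [ht.1], ht.2⟩

lemma global_sol (Om sg cj al om1 om2 : ℝ) (Ap : ℝ → ℝ)
    (hsg : 0 ≤ sg) (hcj : 0 ≤ cj) (hal : 0 ≤ al)
    (hAp : ContinuousOn Ap (Ici 0)) (x₀ : MBE) (hx₀ : nsq x₀ = 1) :
    ∃ x : ℝ → MBE, x 0 = x₀ ∧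
      (∀ t ∈ Ici (0:ℝ), HasDerivAt x (Ftrue Om sg cj al om1 om2 Ap t (x t)) t) ∧
      (∀ t ∈ Ici (0:ℝ), nsq (x t) = 1) := by
  classical
  choose sol h0 hd hc hn using fun n => exists_sol_n Om sg cj al om1 om2 Ap hsg hcj hal hAp x₀ hx₀ n
  have consist : ∀ (m k : ℕ) (t : ℝ), 0 ≤ t → t ≤ (m:ℝ)+1 → t ≤ (k:ℝ)+1 → sol m t = sol k t := by
    intro m k t ht0 htm htk
    set T := min ((m:ℝ)+1) ((k:ℝ)+1) with hT
    have hT0 : (0:ℝ) ≤ T := le_min (by positivity) (by positivity)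
    have := unique_true Om sg cj al om1 om2 Ap hsg hcj hal hAp T hT0 (sol m) (sol k)
      ((hc m).mono (Icc_subset_Icc le_rfl (min_le_left _ _)))
      (fun s hs => (hd m s ⟨hs.1, lt_of_lt_of_le hs.2 (min_le_left _ _)⟩).hasDerivWithinAt)
      (by rw [h0 m]; exact hx₀)
      ((hc k).mono (Icc_subset_Icc le_rfl (min_le_right _ _)))
      (fun s hs => (hd k s ⟨hs.1, lt_of_lt_of_le hs.2 (min_le_right _ _)⟩).hasDerivWithinAt)
      (by rw [h0 k]; exact hx₀)
      (by rw [h0 m, h0 k])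
    exact this ⟨ht0, le_min htm htk⟩
  set X : ℝ → MBE := fun t => if t ≤ 1 then sol 0 t else sol ⌈t⌉₊ t with hX
  have claim1 : ∀ (k : ℕ) (t : ℝ), 0 ≤ t → t ≤ (k:ℝ) + 1 → X t = sol k t := by
    intro k t ht0 htk
    rw [hX]
    by_cases h : t ≤ 1
    · simp only [if_pos h]
      exact consist 0 k t ht0 (by push_cast; linarith) htk
    · simp only [if_neg h]
      exact consist ⌈t⌉₊ k t ht0 (by linarith [Nat.le_ceil t]) htk
  have claim2 : ∀ t : ℝ, 0 ≤ t → HasDerivAt X (Ftrue Om sg cj al om1 om2 Ap t (X t)) t := by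
    intro t ht0
    by_cases h : t < 1
    · have heq : X =ᶠ[nhds t] sol 0 := by
        filter_upwards [Iio_mem_nhds h] with s hs
        rw [hX]
        simp only [if_pos (le_of_lt (mem_Iio.1 hs))]
      have hder := hd 0 t ⟨ht0, by push_cast; linarith⟩
      rw [claim1 0 t ht0 (by push_cast; linarith)]
      exact hder.congr_of_eventuallyEq heq
    · push_neg at h
      set k : ℕ := ⌈t⌉₊ + 1 with hk
      have htk : t < (k:ℝ) + 1 := by
        rw [hk]; push_cast; linarith [Nat.le_ceil t]
      have heq : X =ᶠ[nhds t] sol k := by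
        filter_upwards [Ioo_mem_nhds (lt_of_lt_of_le zero_lt_one h) htk] with s hs
        exact claim1 k s hs.1.le hs.2.le
      have hder := hd k t ⟨ht0, htk⟩
      rw [claim1 k t ht0 htk.le]
      exact hder.congr_of_eventuallyEq heq
  have claim0 : X 0 = x₀ := by
    rw [claim1 0 0 le_rfl (by norm_num), h0 0]
  refine ⟨X, claim0, fun t ht => claim2 t ht, fun t ht => ?_⟩
  rw [claim1 ⌈t⌉₊ t ht (by linarith [Nat.le_ceil t])]
  exact hn ⌈t⌉₊ t ⟨ht, by linarith [Nat.le_ceil t]⟩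

/-! ### component derivatives (two-sided) -/

lemma derivAt_A {x : ℝ → MBE} {d : MBE} {t : ℝ} (h : HasDerivAt x d t) :
    HasDerivAt (fun τ => (x τ).1) d.1 t := by
  have := (ContinuousLinearMap.fst ℝ ℝ (ℝ × ℂ × ℂ)).hasFDerivAt.comp_hasDerivAt t h
  exact this

lemma derivAt_B {x : ℝ → MBE} {d : MBE} {t : ℝ} (h : HasDerivAt x d t) :
    HasDerivAt (fun τ => (x τ).2.1) d.2.1 t := by
  have := ((ContinuousLinearMap.fst ℝ ℝ (ℂ × ℂ)).comp
    (ContinuousLinearMap.snd ℝ ℝ (ℝ × ℂ × ℂ))).hasFDerivAt.comp_hasDerivAt t h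
  exact this

lemma derivAt_C1 {x : ℝ → MBE} {d : MBE} {t : ℝ} (h : HasDerivAt x d t) :
    HasDerivAt (fun τ => (x τ).2.2.1) d.2.2.1 t := by
  have := pC1.hasFDerivAt.comp_hasDerivAt t h
  exact this

lemma derivAt_C2 {x : ℝ → MBE} {d : MBE} {t : ℝ} (h : HasDerivAt x d t) :
    HasDerivAt (fun τ => (x τ).2.2.2) d.2.2.2 t := by
  have := pC2.hasFDerivAt.comp_hasDerivAt t h
  exact this

end MBTools

/-- Global well-posedness of the Maxwell–Bloch system: existence and uniqueness
of a global solution on `[0,∞)` for each initial state on the charge sphere,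
and the solution stays on the charge sphere. -/
theorem mb_wellposedness
    (Ω σ c hbar ω₁ ω₂ q : ℝ) (Ap : ℝ → ℝ)
    (hΩ : 0 < Ω) (hσ : 0 < σ) (hc : 0 < c) (hhbar : 0 < hbar)
    (hω : ω₁ < ω₂) (hq : 0 < q) (hAp : ContinuousOn Ap (Set.Ici 0))
    (A0 B0 : ℝ) (C10 C20 : ℂ) (hinit : ‖C10‖ ^ 2 + ‖C20‖ ^ 2 = 1) :
    ∃ (A B : ℝ → ℝ) (C₁ C₂ : ℝ → ℂ),
      IsMBSolution Ω σ c hbar ω₁ ω₂ q Ap A B C₁ C₂ ∧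
      A 0 = A0 ∧ B 0 = B0 ∧ C₁ 0 = C10 ∧ C₂ 0 = C20 ∧
      (∀ t ≥ (0 : ℝ), ‖C₁ t‖ ^ 2 + ‖C₂ t‖ ^ 2 = 1) ∧
      (∀ (A' B' : ℝ → ℝ) (C₁' C₂' : ℝ → ℂ),
        IsMBSolution Ω σ c hbar ω₁ ω₂ q Ap A' B' C₁' C₂' →
        A' 0 = A0 → B' 0 = B0 → C₁' 0 = C10 → C₂' 0 = C20 →
        ∀ t ≥ (0 : ℝ), A' t = A t ∧ B' t = B t ∧ C₁' t = C₁ t ∧ C₂' t = C₂ t) := by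
  classical
  have hcj0 : (0:ℝ) ≤ 2 * c * q := by positivity
  have hal0 : (0:ℝ) ≤ q / (c * hbar) := by positivity
  set x₀ : MBTools.MBE := (A0, B0, C10, C20) with hx₀def
  have hx₀ : MBTools.nsq x₀ = 1 := by rw [MBTools.nsq]; exact hinit
  obtain ⟨X, hX0, hXd, hXn⟩ := MBTools.global_sol Ω σ (2*c*q) (q/(c*hbar)) ω₁ ω₂ Ap
    hσ.le hcj0 hal0 hAp x₀ hx₀
  have hc0 : (c:ℂ) ≠ 0 := by exact_mod_cast hc.ne'
  have hh0 : (hbar:ℂ) ≠ 0 := by exact_mod_cast hhbar.ne'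
  have hIh : Complex.I * (hbar:ℂ) ≠ 0 := mul_ne_zero Complex.I_ne_zero hh0
  have hmulr : ∀ (Av Apv : ℝ),
      (hbar:ℂ) * ((q/(c*hbar) * (Av + Apv) : ℝ) : ℂ) = ((q / c * (Av + Apv) : ℝ) : ℂ) := by
    intro Av Apv
    push_cast
    field_simp
  have key1 : ∀ (Av Apv : ℝ) (z w : ℂ),
      Complex.I * (hbar:ℂ) * (-(ω₁:ℂ) * Complex.I * z
        + ((q/(c*hbar) * (Av + Apv) : ℝ) : ℂ) * w)
      = (hbar:ℂ) * (ω₁:ℂ) * z + Complex.I * ((q / c * (Av + Apv) : ℝ) : ℂ) * w := by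
    intro Av Apv z w
    have h1 : Complex.I * (hbar:ℂ) * (-(ω₁:ℂ) * Complex.I * z
        + ((q/(c*hbar) * (Av + Apv) : ℝ) : ℂ) * w)
        = (hbar:ℂ) * (ω₁:ℂ) * z
          + Complex.I * ((hbar:ℂ) * ((q/(c*hbar) * (Av + Apv) : ℝ) : ℂ)) * w := by
      linear_combination (-(hbar:ℂ) * (ω₁:ℂ) * z) * Complex.I_mul_I
    rw [h1, hmulr]
  have key2 : ∀ (Av Apv : ℝ) (z w : ℂ),
      Complex.I * (hbar:ℂ) * (-(ω₂:ℂ) * Complex.I * w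
        - ((q/(c*hbar) * (Av + Apv) : ℝ) : ℂ) * z)
      = (hbar:ℂ) * (ω₂:ℂ) * w - Complex.I * ((q / c * (Av + Apv) : ℝ) : ℂ) * z := by
    intro Av Apv z w
    have h1 : Complex.I * (hbar:ℂ) * (-(ω₂:ℂ) * Complex.I * w
        - ((q/(c*hbar) * (Av + Apv) : ℝ) : ℂ) * z)
        = (hbar:ℂ) * (ω₂:ℂ) * w
          - Complex.I * ((hbar:ℂ) * ((q/(c*hbar) * (Av + Apv) : ℝ) : ℂ)) * z := by
      linear_combination (-(hbar:ℂ) * (ω₂:ℂ) * w) * Complex.I_mul_I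
    rw [h1, hmulr]
  refine ⟨fun t => (X t).1, fun t => (X t).2.1, fun t => (X t).2.2.1, fun t => (X t).2.2.2,
    ⟨?_, ?_, ?_, ?_⟩, ?_, ?_, ?_, ?_, ?_, ?_⟩
  · -- A' = B
    intro t ht
    exact MBTools.derivAt_A (hXd t ht)
  · -- B' equation
    intro t ht
    have h := MBTools.derivAt_B (hXd t ht)
    convert h using 1
    show _ = (MBTools.Ftrue Ω σ (2*c*q) (q/(c*hbar)) ω₁ ω₂ Ap t (X t)).2.1
    rw [MBTools.Ftrue, mbCurrent]
    ring
  · -- C₁ equation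
    intro t ht
    refine ⟨(MBTools.Ftrue Ω σ (2*c*q) (q/(c*hbar)) ω₁ ω₂ Ap t (X t)).2.2.1,
      MBTools.derivAt_C1 (hXd t ht), ?_⟩
    show Complex.I * (hbar:ℂ) * (-(ω₁:ℂ) * Complex.I * (X t).2.2.1
        + ((q/(c*hbar) * ((X t).1 + Ap t) : ℝ) : ℂ) * (X t).2.2.2) = _
    exact key1 (X t).1 (Ap t) (X t).2.2.1 (X t).2.2.2
  · -- C₂ equation
    intro t ht
    refine ⟨(MBTools.Ftrue Ω σ (2*c*q) (q/(c*hbar)) ω₁ ω₂ Ap t (X t)).2.2.2,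
      MBTools.derivAt_C2 (hXd t ht), ?_⟩
    show Complex.I * (hbar:ℂ) * (-(ω₂:ℂ) * Complex.I * (X t).2.2.2
        - ((q/(c*hbar) * ((X t).1 + Ap t) : ℝ) : ℂ) * (X t).2.2.1) = _
    exact key2 (X t).1 (Ap t) (X t).2.2.1 (X t).2.2.2
  · show (X 0).1 = A0
    rw [hX0]
  · show (X 0).2.1 = B0
    rw [hX0]
  · show (X 0).2.2.1 = C10
    rw [hX0]
  · show (X 0).2.2.2 = C20
    rw [hX0]
  · -- charge conservation
    intro t ht
    have := hXn t ht
    rwa [MBTools.nsq] at this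
  · -- uniqueness
    intro A' B' C₁' C₂' hsol hA0' hB0' hC10' hC20' t ht
    set Y : ℝ → MBTools.MBE := fun τ => (A' τ, B' τ, C₁' τ, C₂' τ) with hY
    have hYd : ∀ s ∈ Set.Ici (0:ℝ), HasDerivAt Y
        (MBTools.Ftrue Ω σ (2*c*q) (q/(c*hbar)) ω₁ ω₂ Ap s (Y s)) s := by
      intro s hs
      have h1 := hsol.hA s hs
      have h2 := hsol.hB s hs
      obtain ⟨d1, hd1, he1⟩ := hsol.hC₁ s hs
      obtain ⟨d2, hd2, he2⟩ := hsol.hC₂ s hs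
      have hd1' : d1 = -(ω₁:ℂ) * Complex.I * C₁' s
          + ((q/(c*hbar) * (A' s + Ap s) : ℝ) : ℂ) * C₂' s := by
        apply mul_left_cancel₀ hIh
        rw [he1, key1]
      have hd2' : d2 = -(ω₂:ℂ) * Complex.I * C₂' s
          - ((q/(c*hbar) * (A' s + Ap s) : ℝ) : ℂ) * C₁' s := by
        apply mul_left_cancel₀ hIh
        rw [he2, key2]
      have h2' : HasDerivAt B' (-Ω^2 * A' s - σ * B' s
          + (2*c*q) * ((starRingEnd ℂ) (C₁' s) * C₂' s).im) s := by
        convert h2 using 1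
        rw [mbCurrent]
        ring
      rw [hd1'] at hd1
      rw [hd2'] at hd2
      exact h1.prodMk (h2'.prodMk (hd1.prodMk hd2))
    have hXc : ContinuousOn X (Set.Icc 0 t) :=
      fun s hs => ((hXd s hs.1).continuousAt).continuousWithinAt
    have hYc : ContinuousOn Y (Set.Icc 0 t) :=
      fun s hs => ((hYd s hs.1).continuousAt).continuousWithinAt
    have hY0 : Y 0 = x₀ := by
      show (A' 0, B' 0, C₁' 0, C₂' 0) = x₀
      rw [hA0', hB0', hC10', hC20']
    have hEq : Y t = X t := by
      have := MBTools.unique_true Ω σ (2*c*q) (q/(c*hbar)) ω₁ ω₂ Ap hσ.le hcj0 hal0 hAp t ht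
        Y X hYc (fun s hs => (hYd s hs.1).hasDerivWithinAt) (by rw [hY0]; exact hx₀)
        hXc (fun s hs => (hXd s hs.1).hasDerivWithinAt) (by rw [hX0]; exact hx₀)
        (by rw [hY0, hX0])
      exact this ⟨ht, le_rfl⟩
    exact ⟨congrArg Prod.fst hEq, congrArg (fun p => p.2.1) hEq,
      congrArg (fun p => p.2.2.1) hEq, congrArg (fun p => p.2.2.2) hEq⟩
end

section
/- There exists a constant d₂ > 0, depending only on Ω, σ, c and q, such that the ball {(A, B) ∈ ℝ² : A² + B² ≤ 2d₂} is an absorbing set for the Maxwell amplitudes: for every solution of the Maxwell–Bloch system with one two-level molecule satisfying the charge constraint |C₁(t)|² + |C₂(t)|² = 1, there exists t₀ ≥ 0 (depending on the initial data) such that A(t)² + B(t)² ≤ 2d₂ for all t ≥ t₀. -/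
/-- Key algebraic (Lyapunov) inequality for the damped oscillator
with bounded forcing. -/
lemma mb_key (Ω σ M ε α u v a b j : ℝ) (hΩ : 0 < Ω) (hσ : 0 < σ) (hM : 0 ≤ M)
    (hj : |j| ≤ M) (hε0 : 0 < ε) (hε1 : ε ≤ 1)
    (hε2 : ε * (2*Ω^2 + σ^2) ≤ 2*σ*Ω^2)
    (hα0 : 0 ≤ α)
    (hαe : α * (Ω^2 + 2) ≤ ε*Ω^2/4)
    (hαs : α * (Ω^2 + 2) ≤ σ/2)
    (hu : σ * u = 2*M^2) (hv : Ω^2 * v = M^2) :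
    (2*b*(-Ω^2*a - σ*b + j) + Ω^2*(2*(a*b)) + ε*(b*b + a*(-Ω^2*a - σ*b + j)))
      + α * (b*b + Ω^2*(a*a) + ε*(a*b)) ≤ u + ε*v := by
  have hΩ2 : (0:ℝ) < Ω^2 := by positivity
  have habs := abs_le.mp hj
  have hj2 : j^2 ≤ M^2 := sq_le_sq' habs.1 habs.2
  have h2 : 2*b*j ≤ σ/2*b^2 + u := by
    rw [← mul_le_mul_iff_right₀ hσ]
    nlinarith [sq_nonneg (σ*b - 2*j)]
  have h3' : a*j ≤ Ω^2/4*a^2 + v := by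
    rw [← mul_le_mul_iff_right₀ hΩ2]
    nlinarith [sq_nonneg (Ω^2*a - 2*j)]
  have h3 : ε*(a*j) ≤ ε*(Ω^2/4*a^2 + v) :=
    mul_le_mul_of_nonneg_left h3' hε0.le
  have h14 : ε*(σ*(-(a*b))) ≤ ε*(Ω^2/2)*a^2 + (σ - ε)*b^2 := by
    have h2Ω2 : (0:ℝ) < 2*Ω^2 := by positivity
    rw [← mul_le_mul_iff_right₀ h2Ω2]
    nlinarith [mul_nonneg hε0.le (sq_nonneg (Ω^2*a + σ*b)),
      mul_nonneg (by linarith : (0:ℝ) ≤ 2*σ*Ω^2 - ε*(2*Ω^2 + σ^2)) (sq_nonneg b)]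
  have hV : b*b + Ω^2*(a*a) + ε*(a*b) ≤ (Ω^2+2)*(a^2+b^2) := by
    nlinarith [sq_nonneg (a+b), sq_nonneg (a-b)]
  have h5 : α * (b*b + Ω^2*(a*a) + ε*(a*b)) ≤ ε*Ω^2/4*a^2 + σ/2*b^2 := by
    have hVa : α * (b*b + Ω^2*(a*a) + ε*(a*b)) ≤ α*((Ω^2+2)*(a^2+b^2)) :=
      mul_le_mul_of_nonneg_left hV hα0
    have hA2 : α*(Ω^2+2)*a^2 ≤ ε*Ω^2/4*a^2 := mul_le_mul_of_nonneg_right hαe (sq_nonneg a)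
    have hB2 : α*(Ω^2+2)*b^2 ≤ σ/2*b^2 := mul_le_mul_of_nonneg_right hαs (sq_nonneg b)
    linarith [hVa, hA2, hB2]
  linarith [h2, h3, h14, h5]


set_option maxHeartbeats 1000000 in
/-- Absorbing ball for the Maxwell amplitudes: there is a radius, depending
only on `Ω, σ, c, q`, which every solution trajectory eventually enters and
never leaves. -/
theorem mb_absorbing_ball
    (Ω σ c q : ℝ) (hΩ : 0 < Ω) (hσ : 0 < σ) (hc : 0 < c) (hq : 0 < q) :
    ∃ d₂ : ℝ, 0 < d₂ ∧
      ∀ (hbar ω₁ ω₂ : ℝ) (Ap A B : ℝ → ℝ) (C₁ C₂ : ℝ → ℂ),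
        0 < hbar → ω₁ < ω₂ → ContinuousOn Ap (Set.Ici 0) →
        IsMBSolution Ω σ c hbar ω₁ ω₂ q Ap A B C₁ C₂ →
        (∀ t ≥ (0 : ℝ), ‖C₁ t‖ ^ 2 + ‖C₂ t‖ ^ 2 = 1) →
        ∃ t₀ ≥ (0 : ℝ), ∀ t ≥ t₀, A t ^ 2 + B t ^ 2 ≤ 2 * d₂ := by
  have hΩ2 : (0:ℝ) < Ω^2 := by positivity
  obtain ⟨M, hMdef, hM⟩ : ∃ M : ℝ, M = c * q ∧ 0 < M := ⟨c*q, rfl, by positivity⟩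
  obtain ⟨μ, hμpos, hμ1, hμ2⟩ : ∃ μ : ℝ, 0 < μ ∧ μ ≤ 1 ∧ μ ≤ Ω^2 :=
    ⟨min 1 (Ω^2), lt_min one_pos hΩ2, min_le_left _ _, min_le_right _ _⟩
  obtain ⟨ε, hεpos, hεμ, hε2⟩ :
      ∃ ε : ℝ, 0 < ε ∧ ε ≤ μ ∧ ε * (2*Ω^2 + σ^2) ≤ 2*σ*Ω^2 := by
    refine ⟨min μ (2*σ*Ω^2/(2*Ω^2+σ^2)), lt_min hμpos (by positivity),
      min_le_left _ _, ?_⟩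
    have h := min_le_right μ (2*σ*Ω^2/(2*Ω^2+σ^2))
    rw [le_div_iff₀ (by positivity)] at h
    linarith
  have hε1 : ε ≤ 1 := hεμ.trans hμ1
  obtain ⟨α, hαpos, hαe, hαs⟩ :
      ∃ α : ℝ, 0 < α ∧ α * (Ω^2+2) ≤ ε*Ω^2/4 ∧ α * (Ω^2+2) ≤ σ/2 := by
    refine ⟨min (ε*Ω^2/4) (σ/2) / (Ω^2+2), by positivity, ?_, ?_⟩ <;>
      rw [div_mul_cancel₀ _ (by positivity : (Ω^2+2:ℝ) ≠ 0)]
    · exact min_le_left _ _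
    · exact min_le_right _ _
  obtain ⟨u, hu, hupos⟩ : ∃ u : ℝ, σ * u = 2*M^2 ∧ 0 < u :=
    ⟨2*M^2/σ, by field_simp, by positivity⟩
  obtain ⟨v, hv, hvpos⟩ : ∃ v : ℝ, Ω^2 * v = M^2 ∧ 0 < v :=
    ⟨M^2/Ω^2, by field_simp, by positivity⟩
  obtain ⟨β, hβdef, hβpos⟩ : ∃ β : ℝ, β = u + ε*v ∧ 0 < β :=
    ⟨u + ε*v, rfl, by positivity⟩
  obtain ⟨κ, hκdef, hκpos⟩ : ∃ κ : ℝ, κ = μ/2 ∧ 0 < κ := ⟨μ/2, rfl, by positivity⟩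
  refine ⟨β/(α*κ), by positivity, ?_⟩
  intro hbar ω₁ ω₂ Ap A B C₁ C₂ _ _ _ sol hnorm
  -- bound on the current
  have hjb : ∀ t ∈ Set.Ici (0:ℝ), |c * mbCurrent q C₁ C₂ t| ≤ M := by
    intro t ht
    have h1 := Complex.abs_im_le_norm ((starRingEnd ℂ) (C₁ t) * C₂ t)
    have h2 : ‖(starRingEnd ℂ) (C₁ t) * C₂ t‖ = ‖C₁ t‖ * ‖C₂ t‖ := by
      rw [norm_mul]
      simp
    rw [h2] at h1
    have hn := hnorm t ht
    have him : |((starRingEnd ℂ) (C₁ t) * C₂ t).im| ≤ 1/2 := by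
      nlinarith [sq_nonneg (‖C₁ t‖ - ‖C₂ t‖)]
    have hmb : |mbCurrent q C₁ C₂ t| ≤ q := by
      rw [mbCurrent, abs_mul]
      calc |2*q| * |((starRingEnd ℂ) (C₁ t) * C₂ t).im| ≤ (2*q) * (1/2) := by
            apply mul_le_mul _ him (abs_nonneg _) (by positivity)
            rw [abs_of_pos (by positivity)]
          _ = q := by ring
    rw [abs_mul, abs_of_pos hc, hMdef]
    exact mul_le_mul_of_nonneg_left hmb hc.le
  -- the Lyapunov function and its derivative
  set D : ℝ → ℝ := fun t => -Ω ^ 2 * A t - σ * B t + c * mbCurrent q C₁ C₂ t with hDdef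
  set V : ℝ → ℝ := fun t => B t * B t + Ω^2 * (A t * A t) + ε * (A t * B t) with hVdef
  set Vd : ℝ → ℝ := fun t =>
    (D t * B t + B t * D t) + Ω^2 * (B t * A t + A t * B t)
      + ε * (B t * B t + A t * D t) with hVddef
  have hVderiv : ∀ t ∈ Set.Ici (0:ℝ), HasDerivAt V (Vd t) t := by
    intro t ht
    have ha := sol.hA t ht
    have hb := sol.hB t ht
    exact ((hb.mul hb).add ((ha.mul ha).const_mul (Ω^2))).add
      ((ha.mul hb).const_mul ε)
  -- the differential inequality
  have hineq : ∀ t ∈ Set.Ici (0:ℝ), Vd t + α * V t ≤ β := by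
    intro t ht
    have key := mb_key Ω σ M ε α u v (A t) (B t) (c * mbCurrent q C₁ C₂ t)
      hΩ hσ hM.le (hjb t ht) hεpos hε1 hε2 hαpos.le hαe hαs hu hv
    have heq : Vd t + α * V t =
        (2*(B t)*(-Ω^2*(A t) - σ*(B t) + c * mbCurrent q C₁ C₂ t)
          + Ω^2*(2*((A t)*(B t)))
          + ε*((B t)*(B t) + (A t)*(-Ω^2*(A t) - σ*(B t) + c * mbCurrent q C₁ C₂ t)))
        + α * ((B t)*(B t) + Ω^2*((A t)*(A t)) + ε*((A t)*(B t))) := by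
      simp only [hVddef, hVdef, hDdef]
      ring
    rw [heq, hβdef]
    exact key
  -- exponential weight
  have hexp : ∀ t : ℝ, HasDerivAt (fun s => Real.exp (α*s)) (α * Real.exp (α*t)) t := by
    intro t
    have h1 : HasDerivAt (fun s : ℝ => α * s) α t := by
      simpa using (hasDerivAt_id t).const_mul α
    have h2 := (Real.hasDerivAt_exp (α*t)).comp t h1
    convert h1.exp using 1; ring
  set W : ℝ → ℝ := fun t => Real.exp (α*t) * V t - β/α * Real.exp (α*t) with hWdef
  have hWderiv : ∀ t ∈ Set.Ici (0:ℝ), HasDerivAt W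
      (Real.exp (α*t) * (Vd t + α * V t - β)) t := by
    intro t ht
    have h1 := ((hexp t).mul (hVderiv t ht)).sub ((hexp t).const_mul (β/α))
    have hba : β / α * (α * Real.exp (α*t)) = β * Real.exp (α*t) := by
      rw [← mul_assoc, div_mul_cancel₀ _ hαpos.ne']
    refine h1.congr_deriv ?_
    rw [hba]; ring
  have hanti : AntitoneOn W (Set.Ici 0) := by
    apply antitoneOn_of_deriv_nonpos (convex_Ici 0)
    · exact fun t ht => (hWderiv t ht).continuousAt.continuousWithinAt
    · intro x hx
      rw [interior_Ici] at hx
      exact (hWderiv x (Set.Ioi_subset_Ici_self hx)).differentiableAt.differentiableWithinAt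
    · intro x hx
      rw [interior_Ici] at hx
      rw [(hWderiv x (Set.Ioi_subset_Ici_self hx)).deriv]
      have h := hineq x (Set.Ioi_subset_Ici_self hx)
      have he : (0:ℝ) < Real.exp (α*x) := Real.exp_pos _
      have hle : Vd x + α * V x - β ≤ 0 := by linarith
      exact mul_nonpos_of_nonneg_of_nonpos he.le hle
  -- choice of t₀
  have htend : Filter.Tendsto (fun t => Real.exp (α*t)) Filter.atTop Filter.atTop :=
    Real.tendsto_exp_atTop.comp (Filter.Tendsto.const_mul_atTop hαpos Filter.tendsto_id)
  obtain ⟨t₁, ht₁⟩ := (htend.eventually_ge_atTop (α * V 0 / β)).exists_forall_of_atTop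
  refine ⟨max t₁ 0, le_max_right _ _, ?_⟩
  intro t ht
  have ht0 : (0:ℝ) ≤ t := le_trans (le_max_right _ _) ht
  have hWle : W t ≤ W 0 := hanti (le_refl (0:ℝ)) ht0 ht0
  have hW0 : W 0 = V 0 - β/α := by
    simp only [hWdef, mul_zero, Real.exp_zero, one_mul, mul_one]
  have hexpt : α * V 0 / β ≤ Real.exp (α*t) := ht₁ t (le_trans (le_max_left _ _) ht)
  have hepos : (0:ℝ) < Real.exp (α*t) := Real.exp_pos _
  have hVt : V t ≤ 2 * (β/α) := by
    have hba : 0 < β/α := by positivity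
    have h1 : Real.exp (α*t) * V t ≤ V 0 + β/α * Real.exp (α*t) := by
      have h := hWle
      rw [hW0] at h
      simp only [hWdef] at h
      linarith
    have h2 : V 0 ≤ β/α * Real.exp (α*t) := by
      rw [div_le_iff₀ hβpos] at hexpt
      rw [div_mul_eq_mul_div, le_div_iff₀ hαpos]
      linarith [hexpt]
    have h3 : Real.exp (α*t) * V t ≤ Real.exp (α*t) * (2 * (β/α)) := by
      have h4 : β/α * Real.exp (α*t) + β/α * Real.exp (α*t)
          = Real.exp (α*t) * (2 * (β/α)) := by ring
      linarith [h1, h2, h4]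
    exact le_of_mul_le_mul_left h3 hepos
  have hlow : κ * (A t ^ 2 + B t ^ 2) ≤ V t := by
    simp only [hVdef, hκdef]
    nlinarith [sq_nonneg (A t + B t), sq_nonneg (A t - B t), hεμ, hεpos.le,
      hμ1, hμ2, hμpos.le]
  rw [← mul_le_mul_iff_right₀ hκpos]
  have heq2 : κ * (2 * (β/(α*κ))) = 2 * (β/α) := by
    field_simp
  rw [heq2]
  exact hlow.trans hVt
end
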